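/- arXiv:2402.07131 — 7 statements merged into one kernel-verified Lean document; each statement's English description precedes it below -/
import Mathlib

section
/- If X₁ ~ Laplace(0, b₁) and X₂ ~ Laplace(0, b₂) are independent with b₁ ≠ b₂, then for all t ≥ 0, P(|X₁ + X₂| > t) = (b₁²/(b₁² − b₂²))·exp(−t/b₁) + (b₂²/(b₂² − b₁²))·exp(−t/b₂). -/
open MeasureTheory Real

/-- The Laplace distribution with location `m` and scale `b`, as a measure on `ℝ`
given by the density `x ↦ (1/(2b)) * exp (-|x - m|/b)`. -/
noncomputable def laplaceMeasure (m b : ℝ) : Measure ℝ :=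
  MeasureTheory.volume.withDensity
    (fun x => ENNReal.ofReal ((1 / (2 * b)) * Real.exp (-|x - m| / b)))

open Set Filter

lemma expIoi {c : ℝ} (hc : 0 < c) (a : ℝ) :
    ∫ x in Ioi a, exp (-(c*x)) = exp (-(c*a)) / c := by
  have h : ∀ x ∈ Ici a, HasDerivAt (fun x => -exp (-(c*x)) / c) (exp (-(c*x))) x := by
    intro x _
    have h1 : HasDerivAt (fun x => -(c*x)) (-c) x := by
      simpa [Pi.neg_def] using ((hasDerivAt_id x).const_mul c).neg
    have h2 : HasDerivAt (fun x => -exp (-(c*x)) / c) (-(exp (-(c*x)) * -c) / c) x :=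
      (h1.exp).neg.div_const c
    convert h2 using 1
    field_simp
  have hint : IntegrableOn (fun x => exp (-(c*x))) (Ioi a) := by
    simpa [neg_mul] using exp_neg_integrableOn_Ioi a hc
  have htend : Tendsto (fun x => -exp (-(c*x)) / c) atTop (nhds 0) := by
    have h1 : Tendsto (fun x : ℝ => -(c*x)) atTop atBot :=
      tendsto_neg_atBot_iff.mpr ((tendsto_const_mul_atTop_of_pos hc).mpr tendsto_id)
    have := (tendsto_exp_atBot.comp h1).neg.div_const c
    simpa using this
  have := integral_Ioi_of_hasDerivAt_of_tendsto' h hint htend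
  rw [this]; field_simp; ring

lemma expIoi_int {c : ℝ} (hc : 0 < c) (a : ℝ) :
    IntegrableOn (fun x => exp (-(c*x))) (Ioi a) := by
  simpa [neg_mul] using exp_neg_integrableOn_Ioi a hc

lemma expIic {c : ℝ} (hc : 0 < c) (a : ℝ) :
    ∫ x in Iic a, exp (c*x) = exp (c*a) / c := by
  have := integral_comp_neg_Ioi (-a) (fun x => exp (c*x))
  simp only [neg_neg, mul_neg] at this
  rw [← this]
  simpa [mul_comm] using expIoi hc (-a)

lemma expIoc {c : ℝ} (hc : c ≠ 0) {a b : ℝ} (hab : a ≤ b) :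
    ∫ x in Ioc a b, exp (c*x) = (exp (c*b) - exp (c*a)) / c := by
  rw [← intervalIntegral.integral_of_le hab]
  have h : ∀ x ∈ uIcc a b, HasDerivAt (fun x => exp (c*x) / c) (exp (c*x)) x := by
    intro x _
    have h1 : HasDerivAt (fun x => c*x) c x := by
      simpa using (hasDerivAt_id x).const_mul c
    have h2 : HasDerivAt (fun x => exp (c*x) / c) (exp (c*x) * c / c) x := (h1.exp).div_const c
    convert h2 using 1
    field_simp
  rw [intervalIntegral.integral_eq_sub_of_hasDerivAt h
    ((continuous_exp.comp (continuous_const.mul continuous_id)).intervalIntegrable a b)]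
  ring

noncomputable def lapd (b : ℝ) : ℝ → ℝ := fun x => (1/(2*b)) * exp (-|x| / b)

lemma lapd_nonneg {b : ℝ} (hb : 0 < b) (x : ℝ) : 0 ≤ lapd b x := by
  unfold lapd; positivity

lemma lapd_even (b x : ℝ) : lapd b (-x) = lapd b x := by simp [lapd]

lemma lapd_cont (b : ℝ) : Continuous (lapd b) := by
  unfold lapd
  exact continuous_const.mul (continuous_exp.comp ((continuous_abs.neg).div_const b))

lemma lapd_Ioi_nonneg {b : ℝ} (hb : 0 < b) {a : ℝ} (ha : 0 ≤ a) :
    ∫ y in Ioi a, lapd b y = exp (-a/b) / 2 := by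
  have hcong : ∀ y ∈ Ioi a, lapd b y = (1/(2*b)) * exp (-((1/b)*y)) := by
    intro y hy
    have : |y| = y := abs_of_nonneg (le_trans ha (le_of_lt hy))
    simp only [lapd, this]
    ring_nf
  rw [setIntegral_congr_fun measurableSet_Ioi hcong, integral_const_mul,
    expIoi (by positivity) a]
  rw [show -((1/b)*a) = -a/b by ring]
  field_simp

lemma expIic_int {c : ℝ} (hc : 0 < c) (a : ℝ) :
    IntegrableOn (fun x => exp (c*x)) (Iic a) := by
  rw [integrableOn_Iic_iff_integrableOn_Iio]
  have h := ((integrable_indicator_iff measurableSet_Ioi).mpr (expIoi_int hc (-a))).comp_neg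
  rw [← integrable_indicator_iff measurableSet_Iio]
  have heq : ∀ x, (Ioi (-a)).indicator (fun y => exp (-(c*y))) (-x)
      = (Iio a).indicator (fun y => exp (c*y)) x := by
    intro x
    by_cases hx : x < a
    · simp [Set.indicator, hx, mul_neg]
    · simp [Set.indicator, hx]
  simpa [heq] using h

lemma lapd_int {b : ℝ} (hb : 0 < b) : Integrable (lapd b) := by
  have h1 : IntegrableOn (lapd b) (Ioi 0) := by
    apply (integrable_congr ?_).mp ((expIoi_int (c := 1/b) (by positivity) 0).const_mul (1/(2*b)))
    filter_upwards [ae_restrict_mem measurableSet_Ioi] with y hy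
    have : |y| = y := abs_of_nonneg (le_of_lt hy)
    simp only [lapd, this]
    ring_nf
  have h2 : IntegrableOn (lapd b) (Iic 0) := by
    apply (integrable_congr ?_).mp ((expIic_int (c := 1/b) (by positivity) 0).const_mul (1/(2*b)))
    filter_upwards [ae_restrict_mem measurableSet_Iic] with y hy
    have : |y| = -y := abs_of_nonpos hy
    simp only [lapd, this]
    ring_nf
  have := h2.union h1
  rwa [Iic_union_Ioi, integrableOn_univ] at this

noncomputable def lapT (b : ℝ) : ℝ → ℝ :=
  fun a => if 0 ≤ a then exp (-a/b) / 2 else 1 - exp (a/b) / 2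

lemma lapT_nonneg {b : ℝ} (hb : 0 < b) (a : ℝ) : 0 ≤ lapT b a := by
  unfold lapT
  split_ifs with h
  · positivity
  · have : exp (a/b) ≤ 1 := exp_le_one_iff.mpr (div_nonpos_of_nonpos_of_nonneg (le_of_not_ge h) (le_of_lt hb))
    linarith

lemma lapT_le_one {b : ℝ} (hb : 0 < b) (a : ℝ) : lapT b a ≤ 1 := by
  unfold lapT
  split_ifs with h
  · have : exp (-a/b) ≤ 1 := exp_le_one_iff.mpr (div_nonpos_of_nonpos_of_nonneg (by linarith) (le_of_lt hb))
    linarith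
  · have : 0 < exp (a/b) / 2 := by positivity
    linarith

lemma lapT_meas (b : ℝ) : Measurable (lapT b) := by
  unfold lapT
  exact Measurable.ite measurableSet_Ici (by fun_prop) (by fun_prop)

lemma lapd_mass {b : ℝ} (hb : 0 < b) : ∫ y in Ioi (0:ℝ), lapd b y = 1/2 := by
  rw [lapd_Ioi_nonneg hb le_rfl]
  norm_num

lemma lapd_tail {b : ℝ} (hb : 0 < b) (a : ℝ) : ∫ y in Ioi a, lapd b y = lapT b a := by
  rcases le_or_gt 0 a with ha | ha
  · rw [lapd_Ioi_nonneg hb ha, lapT, if_pos ha]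
  · rw [lapT, if_neg (not_le.mpr ha)]
    have hsplit : Ioi a = Ioc a 0 ∪ Ioi (0:ℝ) := (Ioc_union_Ioi_eq_Ioi (le_of_lt ha)).symm
    rw [hsplit, setIntegral_union (Ioc_disjoint_Ioi le_rfl) measurableSet_Ioi
      ((lapd_int hb).integrableOn) ((lapd_int hb).integrableOn), lapd_mass hb]
    have hcong : ∀ y ∈ Ioc a 0, lapd b y = (1/(2*b)) * exp ((1/b)*y) := by
      intro y hy
      have : |y| = -y := abs_of_nonpos hy.2
      simp only [lapd, this]
      ring_nf
    rw [setIntegral_congr_fun measurableSet_Ioc hcong, integral_const_mul,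
      expIoc (by positivity) (le_of_lt ha)]
    have hb' : b ≠ 0 := ne_of_gt hb
    rw [show (1/b)*(0:ℝ) = 0 by ring, show (1/b)*a = a/b by ring, exp_zero]
    field_simp
    ring

lemma slice_meas (t x : ℝ) : MeasurableSet {y : ℝ | t < |x + y|} :=
  measurableSet_lt measurable_const ((measurable_const.add measurable_id).abs)

lemma slice_eq {t : ℝ} (ht : 0 ≤ t) (x : ℝ) :
    {y : ℝ | t < |x + y|} = Iio (-t - x) ∪ Ioi (t - x) := by
  ext y
  simp only [mem_setOf_eq, mem_union, mem_Iio, mem_Ioi, lt_abs]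
  constructor
  · rintro (h | h)
    · right; linarith
    · left; linarith
  · rintro (h | h)
    · right; linarith
    · left; linarith

lemma slice_integral {b : ℝ} (hb : 0 < b) {t : ℝ} (ht : 0 ≤ t) (x : ℝ) :
    ∫ y in {y : ℝ | t < |x + y|}, lapd b y = lapT b (t - x) + lapT b (t + x) := by
  rw [slice_eq ht x, setIntegral_union ?_ measurableSet_Ioi
    ((lapd_int hb).integrableOn) ((lapd_int hb).integrableOn)]
  · have h1 : ∫ y in Iio (-t - x), lapd b y = lapT b (t + x) := by
      rw [← integral_Iic_eq_integral_Iio, show -t - x = -(t+x) by ring,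
        ← integral_comp_neg_Ioi]
      simp_rw [lapd_even]
      exact lapd_tail hb (t+x)
    rw [h1, lapd_tail hb (t - x)]
    ring
  · apply Set.disjoint_left.mpr
    intro y hy hy'
    simp only [mem_Iio] at hy
    simp only [mem_Ioi] at hy'
    linarith

lemma outer_int {b₁ b₂ t : ℝ} (hb₁ : 0 < b₁) (hb₂ : 0 < b₂) :
    Integrable (fun x => lapd b₁ x * lapT b₂ (t - x)) := by
  apply Integrable.mono (lapd_int hb₁)
  · exact ((lapd_cont b₁).measurable.mul ((lapT_meas b₂).comp
      (measurable_const.sub measurable_id))).aestronglyMeasurable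
  · filter_upwards with x
    rw [Real.norm_eq_abs, Real.norm_eq_abs,
      abs_of_nonneg (mul_nonneg (lapd_nonneg hb₁ x) (lapT_nonneg hb₂ _)),
      abs_of_nonneg (lapd_nonneg hb₁ x)]
    calc lapd b₁ x * lapT b₂ (t - x) ≤ lapd b₁ x * 1 :=
          mul_le_mul_of_nonneg_left (lapT_le_one hb₂ _) (lapd_nonneg hb₁ x)
      _ = lapd b₁ x := mul_one _

lemma region1 {b₁ b₂ t : ℝ} (hb₁ : 0 < b₁) (hb₂ : 0 < b₂) (ht : 0 ≤ t) :
    ∫ x in Iic (0:ℝ), lapd b₁ x * lapT b₂ (t - x)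
      = exp (-t/b₂)/(4*b₁) * (1 / (1/b₁ + 1/b₂)) := by
  have hc : (0:ℝ) < 1/b₁ + 1/b₂ := by positivity
  have hcong : ∀ x ∈ Iic (0:ℝ), lapd b₁ x * lapT b₂ (t - x)
      = (exp (-t/b₂)/(4*b₁)) * exp ((1/b₁ + 1/b₂)*x) := by
    intro x hx
    simp only [mem_Iic] at hx
    rw [lapd, lapT, if_pos (by linarith : (0:ℝ) ≤ t - x), abs_of_nonpos hx,
      show (- -x/b₁) = x * (1/b₁) by ring,
      show (-(t - x)/b₂) = -t/b₂ + x * (1/b₂) by ring,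
      show ((1/b₁ + 1/b₂)*x) = x*(1/b₁) + x*(1/b₂) by ring,
      exp_add, exp_add]
    ring
  rw [setIntegral_congr_fun measurableSet_Iic hcong, integral_const_mul, expIic hc 0]
  simp [exp_zero]

lemma region2 {b₁ b₂ t : ℝ} (hb₁ : 0 < b₁) (hb₂ : 0 < b₂) (hne : b₁ ≠ b₂) (ht : 0 ≤ t) :
    ∫ x in Ioc (0:ℝ) t, lapd b₁ x * lapT b₂ (t - x)
      = exp (-t/b₂)/(4*b₁) * ((exp ((1/b₂ - 1/b₁)*t) - 1) / (1/b₂ - 1/b₁)) := by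
  have hα : (1:ℝ)/b₂ - 1/b₁ ≠ 0 := by
    intro h
    apply hne
    field_simp at h
    linarith
  have hcong : ∀ x ∈ Ioc (0:ℝ) t, lapd b₁ x * lapT b₂ (t - x)
      = (exp (-t/b₂)/(4*b₁)) * exp ((1/b₂ - 1/b₁)*x) := by
    intro x hx
    rw [lapd, lapT, if_pos (by linarith [hx.2] : (0:ℝ) ≤ t - x), abs_of_pos hx.1,
      show (-x/b₁) = -(x * (1/b₁)) by ring,
      show (-(t - x)/b₂) = -t/b₂ + x * (1/b₂) by ring,
      show ((1/b₂ - 1/b₁)*x) = x*(1/b₂) + -(x*(1/b₁)) by ring,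
      exp_add, exp_add]
    ring
  rw [setIntegral_congr_fun measurableSet_Ioc hcong, integral_const_mul, expIoc hα ht]
  rw [mul_comm ((1:ℝ)/b₂ - 1/b₁) t]
  simp [exp_zero]

lemma region3 {b₁ b₂ t : ℝ} (hb₁ : 0 < b₁) (hb₂ : 0 < b₂) (ht : 0 ≤ t) :
    ∫ x in Ioi t, lapd b₁ x * lapT b₂ (t - x)
      = (1/(2*b₁)) * (exp (-(1/b₁*t)) / (1/b₁))
        - (exp (t/b₂)/(4*b₁)) * (exp (-((1/b₁ + 1/b₂)*t)) / (1/b₁ + 1/b₂)) := by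
  have hc : (0:ℝ) < 1/b₁ + 1/b₂ := by positivity
  have hb₁' : (0:ℝ) < 1/b₁ := by positivity
  have hcong : ∀ x ∈ Ioi t, lapd b₁ x * lapT b₂ (t - x)
      = (1/(2*b₁)) * exp (-(1/b₁*x)) - (exp (t/b₂)/(4*b₁)) * exp (-((1/b₁ + 1/b₂)*x)) := by
    intro x hx
    simp only [mem_Ioi] at hx
    rw [lapd, lapT, if_neg (by push_neg; linarith : ¬ (0:ℝ) ≤ t - x),
      abs_of_pos (lt_of_le_of_lt ht hx),
      show (-x/b₁) = -(1/b₁*x) by ring,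
      show ((t - x)/b₂) = t/b₂ + -(1/b₂*x) by ring,
      show (-((1/b₁ + 1/b₂)*x)) = -(1/b₁*x) + -(1/b₂*x) by ring,
      exp_add, exp_add]
    ring
  rw [setIntegral_congr_fun measurableSet_Ioi hcong,
    integral_sub ((expIoi_int hb₁' t).const_mul _) ((expIoi_int hc t).const_mul _),
    integral_const_mul, integral_const_mul, expIoi hb₁' t, expIoi hc t]

lemma outer_int2 {b₁ b₂ t : ℝ} (hb₁ : 0 < b₁) (hb₂ : 0 < b₂) :
    Integrable (fun x => lapd b₁ x * (lapT b₂ (t - x) + lapT b₂ (t + x))) := by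
  have hf := outer_int (b₂ := b₂) (t := t) hb₁ hb₂
  have hgf : ∀ x : ℝ, lapd b₁ (-x) * lapT b₂ (t - (-x)) = lapd b₁ x * lapT b₂ (t + x) := by
    intro x; rw [lapd_even]; ring_nf
  have hg : Integrable (fun x => lapd b₁ x * lapT b₂ (t + x)) :=
    hf.comp_neg.congr (ae_of_all _ hgf)
  exact (hf.add hg).congr (ae_of_all _ fun x => by simp only [Pi.add_apply]; ring)

lemma outer_value {b₁ b₂ t : ℝ} (hb₁ : 0 < b₁) (hb₂ : 0 < b₂) (hne : b₁ ≠ b₂) (ht : 0 ≤ t) :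
    ∫ x, lapd b₁ x * (lapT b₂ (t - x) + lapT b₂ (t + x))
      = b₁^2/(b₁^2-b₂^2) * exp (-t/b₁) + b₂^2/(b₂^2-b₁^2) * exp (-t/b₂) := by
  have hf := outer_int (b₂ := b₂) (t := t) hb₁ hb₂
  have hgf : ∀ x : ℝ, lapd b₁ (-x) * lapT b₂ (t - (-x)) = lapd b₁ x * lapT b₂ (t + x) := by
    intro x; rw [lapd_even]; ring_nf
  have hg : Integrable (fun x => lapd b₁ x * lapT b₂ (t + x)) :=
    hf.comp_neg.congr (ae_of_all _ hgf)
  have hsum : ∫ x, lapd b₁ x * (lapT b₂ (t - x) + lapT b₂ (t + x))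
      = (∫ x, lapd b₁ x * lapT b₂ (t - x)) + ∫ x, lapd b₁ x * lapT b₂ (t + x) := by
    rw [← integral_add hf hg]
    congr 1; funext x; ring
  have h2 : (∫ x, lapd b₁ x * lapT b₂ (t + x)) = ∫ x, lapd b₁ x * lapT b₂ (t - x) :=
    calc (∫ x, lapd b₁ x * lapT b₂ (t + x))
        = ∫ x, lapd b₁ (-x) * lapT b₂ (t - (-x)) :=
          integral_congr_ae (ae_of_all _ fun x => (hgf x).symm)
      _ = ∫ x, lapd b₁ x * lapT b₂ (t - x) :=
          integral_neg_eq_self (fun x => lapd b₁ x * lapT b₂ (t - x)) volume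
  have hJ : (∫ x, lapd b₁ x * lapT b₂ (t - x))
      = (∫ x in Iic (0:ℝ), lapd b₁ x * lapT b₂ (t - x))
        + ((∫ x in Ioc (0:ℝ) t, lapd b₁ x * lapT b₂ (t - x))
          + ∫ x in Ioi t, lapd b₁ x * lapT b₂ (t - x)) := by
    rw [← integral_add_compl (measurableSet_Iic : MeasurableSet (Iic (0:ℝ))) hf, compl_Iic]
    congr 1
    rw [← Ioc_union_Ioi_eq_Ioi ht,
      setIntegral_union (Ioc_disjoint_Ioi le_rfl) measurableSet_Ioi
        hf.integrableOn hf.integrableOn]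
  rw [hsum, h2, hJ, region1 hb₁ hb₂ ht, region2 hb₁ hb₂ hne ht, region3 hb₁ hb₂ ht]
  have e1 : exp (((1:ℝ)/b₂ - 1/b₁)*t) = exp (-t/b₁) / exp (-t/b₂) := by
    rw [← exp_sub]; congr 1; field_simp; ring
  have e2 : exp (t/b₂) = (exp (-t/b₂))⁻¹ := by
    rw [← exp_neg]; congr 1; ring
  have e3 : exp (-(((1:ℝ)/b₁ + 1/b₂)*t)) = exp (-t/b₁) * exp (-t/b₂) := by
    rw [← exp_add]; congr 1; field_simp; ring
  have e4 : exp (-((1:ℝ)/b₁*t)) = exp (-t/b₁) := by congr 1; ring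
  rw [e1, e2, e3, e4]
  have hA : exp (-t/b₁) ≠ 0 := exp_ne_zero _
  have hB : exp (-t/b₂) ≠ 0 := exp_ne_zero _
  have hb₁' : b₁ ≠ 0 := ne_of_gt hb₁
  have hb₂' : b₂ ≠ 0 := ne_of_gt hb₂
  have hαα : (1:ℝ)/b₂ - 1/b₁ ≠ 0 := by
    intro h; apply hne; field_simp at h; linarith
  have hcc : (1:ℝ)/b₁ + 1/b₂ ≠ 0 := by positivity
  have hd1 : b₁^2 - b₂^2 ≠ 0 := by
    intro h
    apply hne
    have : (b₁ - b₂) * (b₁ + b₂) = 0 := by ring_nf; linarith [h]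
    rcases mul_eq_zero.mp this with h' | h'
    · linarith
    · linarith
  have hd2 : b₂^2 - b₁^2 ≠ 0 := fun h => hd1 (by linarith)
  have hab : b₁ - b₂ ≠ 0 := sub_ne_zero.mpr hne
  have hab' : b₁ + b₂ ≠ 0 := by positivity
  rw [show (1:ℝ)/b₂ - 1/b₁ = (b₁ - b₂)/(b₁*b₂) by field_simp,
    show (1:ℝ)/b₁ + 1/b₂ = (b₂ + b₁)/(b₁*b₂) by rw [div_add_div _ _ hb₁' hb₂']; congr 1; ring]
  set A := exp (-t/b₁) with hA'
  set B := exp (-t/b₂) with hB'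
  field_simp
  ring

/-- If `X₁ ~ Laplace(0, b₁)` and `X₂ ~ Laplace(0, b₂)` are independent with `b₁ ≠ b₂`,
then for all `t ≥ 0`,
`P(|X₁ + X₂| > t) = b₁²/(b₁² − b₂²) · exp(−t/b₁) + b₂²/(b₂² − b₁²) · exp(−t/b₂)`. -/
theorem laplace_sum_tail {Ω : Type*} [MeasurableSpace Ω] (μ : Measure Ω)
    [IsProbabilityMeasure μ] (X₁ X₂ : Ω → ℝ) (b₁ b₂ : ℝ)
    (hb₁ : 0 < b₁) (hb₂ : 0 < b₂) (hne : b₁ ≠ b₂)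
    (hm₁ : Measurable X₁) (hm₂ : Measurable X₂)
    (h₁ : Measure.map X₁ μ = laplaceMeasure 0 b₁)
    (h₂ : Measure.map X₂ μ = laplaceMeasure 0 b₂)
    (hind : ProbabilityTheory.IndepFun X₁ X₂ μ) :
    ∀ t : ℝ, 0 ≤ t →
      μ {ω | t < |X₁ ω + X₂ ω|} =
        ENNReal.ofReal
          (b₁ ^ 2 / (b₁ ^ 2 - b₂ ^ 2) * Real.exp (-t / b₁)
            + b₂ ^ 2 / (b₂ ^ 2 - b₁ ^ 2) * Real.exp (-t / b₂)) := by
  intro t ht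
  have hS : MeasurableSet {p : ℝ × ℝ | t < |p.1 + p.2|} :=
    measurableSet_lt measurable_const ((measurable_fst.add measurable_snd).abs)
  have hpre : {ω | t < |X₁ ω + X₂ ω|}
      = (fun ω => (X₁ ω, X₂ ω)) ⁻¹' {p : ℝ × ℝ | t < |p.1 + p.2|} := rfl
  rw [hpre, ← Measure.map_apply (hm₁.prodMk hm₂) hS,
    (ProbabilityTheory.indepFun_iff_map_prod_eq_prod_map_map
      hm₁.aemeasurable hm₂.aemeasurable).mp hind, h₁, h₂]
  haveI : SigmaFinite (laplaceMeasure 0 b₂) := by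
    unfold laplaceMeasure
    exact SigmaFinite.withDensity_of_ne_top (ae_of_all _ fun x => ENNReal.ofReal_ne_top)
  rw [Measure.prod_apply hS]
  have hslice : ∀ x : ℝ,
      laplaceMeasure 0 b₂ (Prod.mk x ⁻¹' {p : ℝ × ℝ | t < |p.1 + p.2|})
        = ENNReal.ofReal (lapT b₂ (t - x) + lapT b₂ (t + x)) := by
    intro x
    have hpre2 : Prod.mk x ⁻¹' {p : ℝ × ℝ | t < |p.1 + p.2|} = {y : ℝ | t < |x + y|} := rfl
    rw [hpre2, laplaceMeasure, withDensity_apply _ (slice_meas t x)]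
    have hcg : ∀ y : ℝ, ENNReal.ofReal ((1/(2*b₂)) * exp (-|y - 0| / b₂))
        = ENNReal.ofReal (lapd b₂ y) := by
      intro y; simp [lapd]
    rw [lintegral_congr hcg,
      ← ofReal_integral_eq_lintegral_ofReal ((lapd_int hb₂).integrableOn)
        (ae_of_all _ (lapd_nonneg hb₂)), slice_integral hb₂ ht x]
  simp_rw [hslice]
  have hmg : Measurable fun x : ℝ => ENNReal.ofReal (lapT b₂ (t - x) + lapT b₂ (t + x)) :=
    ENNReal.measurable_ofReal.comp (((lapT_meas b₂).comp
      (measurable_const.sub measurable_id)).add ((lapT_meas b₂).comp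
      (measurable_const.add measurable_id)))
  have hmf : Measurable fun x : ℝ => ENNReal.ofReal ((1/(2*b₁)) * exp (-|x - 0| / b₁)) := by
    fun_prop
  rw [laplaceMeasure, lintegral_withDensity_eq_lintegral_mul _ hmf hmg]
  have hcg2 : ∀ x : ℝ,
      (ENNReal.ofReal ((1/(2*b₁)) * exp (-|x - 0| / b₁))
        * ENNReal.ofReal (lapT b₂ (t - x) + lapT b₂ (t + x)))
      = ENNReal.ofReal (lapd b₁ x * (lapT b₂ (t - x) + lapT b₂ (t + x))) := by
    intro x
    rw [← ENNReal.ofReal_mul (by positivity)]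
    congr 1
    simp [lapd]
  simp only [Pi.mul_apply]
  rw [lintegral_congr hcg2,
    ← ofReal_integral_eq_lintegral_ofReal (outer_int2 hb₁ hb₂)
      (ae_of_all _ fun x => mul_nonneg (lapd_nonneg hb₁ x)
        (add_nonneg (lapT_nonneg hb₂ _) (lapT_nonneg hb₂ _))),
    outer_value hb₁ hb₂ hne ht]
end

section
/- Let Y₁,…,Y_k be independent real random variables such that P(|Y_i − μ| ≤ c) ≥ 1/2 + η for all i, where η > 0 and c ∈ ℝ. Then for any α ≥ 0, the probability that |Y_{(i)} − μ| ≤ c for all order-statistic indices i with (1 − 2α)k/2 ≤ i ≤ (1 + 2α)k/2 is at least 1 − exp(−2k·max(η − α, 0)²). -/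
open MeasureTheory Real

/-- The `i`-th order statistic of a tuple `y : Fin k → ℝ` (zero-indexed:
`orderStat y i` is the `(i+1)`-th smallest value). -/
noncomputable def orderStat {k : ℕ} (y : Fin k → ℝ) (i : Fin k) : ℝ :=
  y (Tuple.sort y i)

lemma bernoulli_mgf_le {p : ℝ} (hp0 : 0 ≤ p) (hp1 : p ≤ 1) (t : ℝ) :
    1 - p + p * Real.exp t ≤ Real.exp (p * t + t ^ 2 / 8) := by
  set g : ℝ → ℝ := fun s => 1 - p + p * Real.exp s with hg
  have hgpos : ∀ s, 0 < g s := by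
    intro s
    have hE := Real.exp_pos s
    show 0 < 1 - p + p * Real.exp s
    rcases le_or_gt (Real.exp s) 1 with h | h
    · nlinarith [mul_nonneg (sub_nonneg.2 hp1) (sub_nonneg.2 h)]
    · nlinarith [mul_nonneg hp0 (by linarith : (0:ℝ) ≤ Real.exp s - 1)]
  have hg' : ∀ s : ℝ, HasDerivAt g (p * Real.exp s) s := fun s =>
    ((Real.hasDerivAt_exp s).const_mul p).const_add (1 - p)
  set F : ℝ → ℝ := fun s => p * s + s ^ 2 / 8 - Real.log (g s) with hF
  set F' : ℝ → ℝ := fun s => p + s / 4 - p * Real.exp s / g s with hF'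
  have hFd : ∀ s : ℝ, HasDerivAt F (F' s) s := by
    intro s
    have h1 : HasDerivAt (fun x : ℝ => p * x + x ^ 2 / 8) (p + s / 4) s := by
      have := ((hasDerivAt_id s).const_mul p).add ((hasDerivAt_pow 2 s).div_const 8)
      refine this.congr_deriv ?_
      simp
      ring
    have h2 : HasDerivAt (fun x => Real.log (g x)) (p * Real.exp s / g s) s :=
      (hg' s).log (hgpos s).ne'
    exact h1.sub h2
  have hFd' : ∀ s : ℝ, HasDerivAt F' (1 / 4 - p * (1 - p) * Real.exp s / g s ^ 2) s := by
    intro s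
    have h1 : HasDerivAt (fun x : ℝ => p + x / 4) (1 / 4) s := by
      simpa using ((hasDerivAt_id s).div_const 4).const_add p
    have h2 : HasDerivAt (fun x => p * Real.exp x / g x)
        ((p * Real.exp s * g s - p * Real.exp s * (p * Real.exp s)) / g s ^ 2) s :=
      ((Real.hasDerivAt_exp s).const_mul p).div (hg' s) (hgpos s).ne'
    have h3 := h1.sub h2
    refine h3.congr_deriv ?_
    have hgs : g s = 1 - p + p * Real.exp s := rfl
    rw [hgs]
    have hne : (1 - p + p * Real.exp s) ^ 2 ≠ 0 := by
      have := hgpos s; rw [hgs] at this; positivity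
    field_simp
    ring
  have hF'mono : Monotone F' := by
    refine monotone_of_deriv_nonneg (fun s => (hFd' s).differentiableAt) (fun s => ?_)
    rw [(hFd' s).deriv]
    have hgs : g s = 1 - p + p * Real.exp s := rfl
    have h2 : p * (1 - p) * Real.exp s / g s ^ 2 ≤ 1 / 4 := by
      rw [div_le_iff₀ (pow_pos (hgpos s) 2), hgs]
      nlinarith [sq_nonneg ((1 - p) - p * Real.exp s)]
    linarith
  have hg0 : g 0 = 1 := by simp [hg]
  have hF'0 : F' 0 = 0 := by simp [hF', hg0]
  have hF0 : F 0 = 0 := by simp [hF, hg0]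
  have hFnonneg : ∀ s : ℝ, 0 ≤ F s := by
    have hFdiff : Differentiable ℝ F := fun s => (hFd s).differentiableAt
    intro s
    rcases le_total 0 s with hs | hs
    · have hmono : MonotoneOn F (Set.Ici (0:ℝ)) := by
        refine monotoneOn_of_deriv_nonneg (convex_Ici 0) hFdiff.continuous.continuousOn
          hFdiff.differentiableOn ?_
        intro x hx
        rw [interior_Ici] at hx
        rw [(hFd x).deriv, ← hF'0]
        exact hF'mono (le_of_lt hx)
      have := hmono Set.self_mem_Ici (Set.mem_Ici.2 hs) hs
      rwa [hF0] at this
    · have hanti : AntitoneOn F (Set.Iic (0:ℝ)) := by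
        refine antitoneOn_of_deriv_nonpos (convex_Iic 0) hFdiff.continuous.continuousOn
          hFdiff.differentiableOn ?_
        intro x hx
        rw [interior_Iic] at hx
        rw [(hFd x).deriv, ← hF'0]
        exact hF'mono (le_of_lt hx)
      have := hanti (Set.mem_Iic.2 hs) Set.self_mem_Iic hs
      rwa [hF0] at this
  have hlog : Real.log (g t) ≤ p * t + t ^ 2 / 8 := by
    have h := hFnonneg t
    simp only [hF] at h
    linarith
  calc 1 - p + p * Real.exp t = g t := rfl
    _ = Real.exp (Real.log (g t)) := (Real.exp_log (hgpos t)).symm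
    _ ≤ _ := Real.exp_le_exp.2 hlog

lemma orderStat_mem (k : ℕ) (y : Fin k → ℝ) (m c : ℝ) (i : Fin k)
    (hL : (Finset.univ.filter (fun j => y j < m - c)).card ≤ (i : ℕ))
    (hU : (i : ℕ) + (Finset.univ.filter (fun j => m + c < y j)).card + 1 ≤ k) :
    |orderStat y i - m| ≤ c := by
  classical
  set σ := Tuple.sort y with hσ
  have hmono : Monotone (y ∘ σ) := Tuple.monotone_sort y
  have hcardL : (Finset.univ.filter fun j => y (σ j) < m - c).card
      = (Finset.univ.filter fun j => y j < m - c).card := by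
    refine Finset.card_bij (fun a _ => σ a) ?_ ?_ ?_
    · intro a ha
      simp only [Finset.mem_filter, Finset.mem_univ, true_and] at ha ⊢
      exact ha
    · intro a _ b _ hab
      exact σ.injective hab
    · intro b hb
      simp only [Finset.mem_filter, Finset.mem_univ, true_and] at hb
      exact ⟨σ.symm b, by simpa using hb, by simp⟩
  have hcardU : (Finset.univ.filter fun j => m + c < y (σ j)).card
      = (Finset.univ.filter fun j => m + c < y j).card := by
    refine Finset.card_bij (fun a _ => σ a) ?_ ?_ ?_
    · intro a ha
      simp only [Finset.mem_filter, Finset.mem_univ, true_and] at ha ⊢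
      exact ha
    · intro a _ b _ hab
      exact σ.injective hab
    · intro b hb
      simp only [Finset.mem_filter, Finset.mem_univ, true_and] at hb
      exact ⟨σ.symm b, by simpa using hb, by simp⟩
  have hlow : ¬ y (σ i) < m - c := by
    intro hlt
    have hsub : Finset.Iic i ⊆ Finset.univ.filter fun j => y (σ j) < m - c := by
      intro j hj
      simp only [Finset.mem_Iic] at hj
      simp only [Finset.mem_filter, Finset.mem_univ, true_and]
      exact lt_of_le_of_lt (hmono hj) hlt
    have h1 := Finset.card_le_card hsub
    rw [Fin.card_Iic, hcardL] at h1
    omega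
  have hhigh : ¬ m + c < y (σ i) := by
    intro hlt
    have hsub : Finset.Ici i ⊆ Finset.univ.filter fun j => m + c < y (σ j) := by
      intro j hj
      simp only [Finset.mem_Ici] at hj
      simp only [Finset.mem_filter, Finset.mem_univ, true_and]
      exact lt_of_lt_of_le hlt (hmono hj)
    have h1 := Finset.card_le_card hsub
    rw [Fin.card_Ici, hcardU] at h1
    have h2 : (i : ℕ) < k := i.isLt
    omega
  push_neg at hlow hhigh
  have : orderStat y i = y (σ i) := rfl
  rw [this, abs_le]
  constructor <;> linarith

/-- Let `Y₁, …, Y_k` be independent real random variables with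
`P(|Y_i − μ| ≤ c) ≥ 1/2 + η` for all `i`, where `η > 0`.  Then for any `α ≥ 0`,
with probability at least `1 − exp(−2k·max(η − α, 0)²)`, every order statistic
`Y_{(i)}` with `(1 − 2α)k/2 ≤ i ≤ (1 + 2α)k/2` satisfies `|Y_{(i)} − μ| ≤ c`. -/
theorem orderStat_concentration {Ω : Type*} [MeasurableSpace Ω] (μ : Measure Ω)
    [IsProbabilityMeasure μ] {k : ℕ} (Y : Fin k → Ω → ℝ)
    (hmeas : ∀ i, Measurable (Y i))
    (hindep : ProbabilityTheory.iIndepFun Y μ)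
    (m c η : ℝ) (hη : 0 < η)
    (hconc : ∀ i, ENNReal.ofReal (1 / 2 + η) ≤ μ {ω | |Y i ω - m| ≤ c})
    (α : ℝ) (hα : 0 ≤ α) :
    ENNReal.ofReal (1 - Real.exp (-2 * k * max (η - α) 0 ^ 2)) ≤
      μ {ω | ∀ i : Fin k,
        (1 - 2 * α) * k / 2 ≤ (i : ℝ) + 1 → (i : ℝ) + 1 ≤ (1 + 2 * α) * k / 2 →
          |orderStat (fun j => Y j ω) i - m| ≤ c} := by
  classical
  rcases le_or_gt η α with hαη | hαη
  · have hmax : max (η - α) 0 = 0 := max_eq_right (by linarith)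
    rw [hmax]
    norm_num
  have hmax : max (η - α) 0 = η - α := max_eq_left (by linarith)
  rw [hmax]
  set φ : ℝ → ℝ := fun x => if |x - m| ≤ c then 0 else 1 with hφdef
  have hφmeas : Measurable φ := by
    refine Measurable.ite ?_ measurable_const measurable_const
    exact measurableSet_le (measurable_id.sub_const m).abs measurable_const
  set Z : Fin k → Ω → ℝ := fun j => φ ∘ Y j with hZdef
  have hZmeas : ∀ j, Measurable (Z j) := fun j => hφmeas.comp (hmeas j)
  have hZindep : ProbabilityTheory.iIndepFun Z μ :=
    hindep.comp (fun _ => φ) (fun _ => hφmeas)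
  have hZ01 : ∀ j ω, Z j ω = 0 ∨ Z j ω = 1 := by
    intro j ω
    by_cases h : |Y j ω - m| ≤ c
    · left; simp only [hZdef, hφdef, Function.comp_apply, if_pos h]
    · right; simp only [hZdef, hφdef, Function.comp_apply, if_neg h]
  have hAmeas : ∀ j, MeasurableSet {ω | |Y j ω - m| ≤ c} := fun j =>
    measurableSet_le ((hmeas j).sub_const m).abs measurable_const
  have hBmeas : ∀ j, MeasurableSet {ω | ¬ |Y j ω - m| ≤ c} := fun j => by
    rw [← Set.compl_setOf]; exact (hAmeas j).compl
  set q : Fin k → ℝ := fun j => (μ {ω | ¬ |Y j ω - m| ≤ c}).toReal with hqdef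
  have hq0 : ∀ j, 0 ≤ q j := fun j => ENNReal.toReal_nonneg
  have hqle : ∀ j, q j ≤ 1 / 2 - η := by
    intro j
    have hA1 : (1:ℝ)/2 + η ≤ (μ {ω | |Y j ω - m| ≤ c}).toReal :=
      (ENNReal.ofReal_le_iff_le_toReal (measure_ne_top μ _)).mp (hconc j)
    have hcompl : μ {ω | ¬ |Y j ω - m| ≤ c} = 1 - μ {ω | |Y j ω - m| ≤ c} := by
      rw [← Set.compl_setOf, prob_compl_eq_one_sub (hAmeas j)]
    have hq' : q j = 1 - (μ {ω | |Y j ω - m| ≤ c}).toReal := by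
      simp only [hqdef]
      rw [hcompl, ENNReal.toReal_sub_of_le prob_le_one ENNReal.one_ne_top]
      simp
    linarith
  have hZind : ∀ j, Z j = Set.indicator {ω | ¬ |Y j ω - m| ≤ c} (fun _ => (1:ℝ)) := by
    intro j
    funext ω
    by_cases h : |Y j ω - m| ≤ c
    · simp only [hZdef, hφdef, Function.comp_apply, if_pos h]
      have hnm : ω ∉ {ω | ¬|Y j ω - m| ≤ c} := fun hmem => hmem h
      exact (Set.indicator_of_notMem hnm (fun _ => (1:ℝ))).symm
    · simp only [hZdef, hφdef, Function.comp_apply, if_neg h]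
      have hm : ω ∈ {ω | ¬|Y j ω - m| ≤ c} := h
      exact (Set.indicator_of_mem hm (fun _ => (1:ℝ))).symm
  have hZint : ∀ j, Integrable (Z j) μ := fun j => by
    rw [hZind j]; exact (integrable_const (1:ℝ)).indicator (hBmeas j)
  have hZintegral : ∀ j, ∫ ω, Z j ω ∂μ = q j := by
    intro j
    rw [hZind j, MeasureTheory.integral_indicator_const (1:ℝ) (hBmeas j)]
    simp [hqdef, measureReal_def]
  set t : ℝ := 4 * (η - α) with htdef
  have ht : 0 ≤ t := by rw [htdef]; linarith
  have hexpZ : ∀ j, (fun ω => Real.exp (t * Z j ω)) = fun ω => 1 + (Real.exp t - 1) * Z j ω := by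
    intro j
    funext ω
    rcases hZ01 j ω with h | h
    · simp [h]
    · rw [h]; simp
  have hexpint : ∀ j, Integrable (fun ω => Real.exp (t * Z j ω)) μ := by
    intro j
    rw [hexpZ j]
    exact (integrable_const 1).add ((hZint j).const_mul _)
  have hmgfle : ∀ j, ProbabilityTheory.mgf (Z j) μ t ≤ Real.exp ((1/2 - η) * t + t ^ 2 / 8) := by
    intro j
    have h1 : ProbabilityTheory.mgf (Z j) μ t = 1 + (Real.exp t - 1) * q j := by
      rw [show ProbabilityTheory.mgf (Z j) μ t = ∫ ω, Real.exp (t * Z j ω) ∂μ from rfl]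
      rw [hexpZ j, integral_add (integrable_const 1) ((hZint j).const_mul _),
        integral_const, MeasureTheory.integral_const_mul, hZintegral j]
      simp
    have h3 := bernoulli_mgf_le (hq0 j) (le_trans (hqle j) (by linarith)) t
    have h4 : q j * t + t ^ 2 / 8 ≤ (1/2 - η) * t + t ^ 2 / 8 := by
      have := mul_le_mul_of_nonneg_right (hqle j) ht
      linarith
    have h2 : 1 + (Real.exp t - 1) * q j = 1 - q j + q j * Real.exp t := by ring
    rw [h1, h2]
    exact h3.trans (Real.exp_le_exp.2 h4)
  set X : Ω → ℝ := ∑ j : Fin k, Z j with hXdef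
  set ε : ℝ := (1 - 2*α) * k / 2 with hεdef
  have hchern := ProbabilityTheory.measure_ge_le_exp_mul_mgf (μ := μ) (X := X) ε ht
      (by rw [hXdef]; exact hZindep.integrable_exp_mul_sum hZmeas (fun j _ => hexpint j))
  have hmgfX : ProbabilityTheory.mgf X μ t ≤ Real.exp (k * ((1/2 - η) * t + t ^ 2 / 8)) := by
    rw [hXdef, hZindep.mgf_sum hZmeas]
    calc ∏ j : Fin k, ProbabilityTheory.mgf (Z j) μ t
        ≤ ∏ _j : Fin k, Real.exp ((1/2 - η) * t + t ^ 2 / 8) :=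
          Finset.prod_le_prod (fun j _ => ProbabilityTheory.mgf_nonneg) (fun j _ => hmgfle j)
      _ = Real.exp (k * ((1/2 - η) * t + t ^ 2 / 8)) := by
          rw [Finset.prod_const, Finset.card_univ, Fintype.card_fin, ← Real.exp_nat_mul]
  have hexpeq : Real.exp (-t * ε) * Real.exp (k * ((1/2 - η) * t + t ^ 2 / 8))
      = Real.exp (-2 * k * (η - α) ^ 2) := by
    rw [← Real.exp_add]
    congr 1
    rw [hεdef, htdef]
    ring
  have htail : μ {ω | ε ≤ X ω} ≤ ENNReal.ofReal (Real.exp (-2 * k * (η - α) ^ 2)) := by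
    rw [ENNReal.le_ofReal_iff_toReal_le (measure_ne_top μ _) (Real.exp_pos _).le]
    calc (μ {ω | ε ≤ X ω}).toReal ≤ Real.exp (-t * ε) * ProbabilityTheory.mgf X μ t := hchern
      _ ≤ Real.exp (-t * ε) * Real.exp (k * ((1/2 - η) * t + t ^ 2 / 8)) :=
          mul_le_mul_of_nonneg_left hmgfX (Real.exp_pos _).le
      _ = _ := hexpeq
  have hsubset : {ω | X ω < ε} ⊆ {ω | ∀ i : Fin k,
      (1 - 2 * α) * k / 2 ≤ (i : ℝ) + 1 → (i : ℝ) + 1 ≤ (1 + 2 * α) * k / 2 →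
        |orderStat (fun j => Y j ω) i - m| ≤ c} := by
    intro ω hω i h1 h2
    have hXcount : X ω = ((Finset.univ.filter fun j => ¬ |Y j ω - m| ≤ c).card : ℝ) := by
      rw [hXdef, Finset.sum_apply, Finset.card_filter]
      push_cast
      refine Finset.sum_congr rfl (fun j _ => ?_)
      by_cases h : |Y j ω - m| ≤ c
      · simp only [hZdef, hφdef, Function.comp_apply, if_pos h, if_neg (not_not.mpr h)]
      · simp only [hZdef, hφdef, Function.comp_apply, if_neg h, if_pos h]
    have hωlt : ((Finset.univ.filter fun j => ¬ |Y j ω - m| ≤ c).card : ℝ) < ε := by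
      rw [← hXcount]; exact hω
    have hLB : (Finset.univ.filter fun j => Y j ω < m - c).card
        ≤ (Finset.univ.filter fun j => ¬ |Y j ω - m| ≤ c).card := by
      apply Finset.card_le_card
      apply Finset.monotone_filter_right
      intro j hj hlt habs
      have h' := abs_le.1 habs
      linarith [h'.1]
    have hUB : (Finset.univ.filter fun j => m + c < Y j ω).card
        ≤ (Finset.univ.filter fun j => ¬ |Y j ω - m| ≤ c).card := by
      apply Finset.card_le_card
      apply Finset.monotone_filter_right
      intro j hj hlt habs
      have h' := abs_le.1 habs
      linarith [h'.2]
    have hLnat : (Finset.univ.filter fun j => Y j ω < m - c).card ≤ (i : ℕ) := by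
      have hr : ((Finset.univ.filter fun j => Y j ω < m - c).card : ℝ) < (i : ℝ) + 1 := by
        have := (Nat.cast_le (α := ℝ)).2 hLB
        rw [hεdef] at hωlt
        linarith
      have : ((Finset.univ.filter fun j => Y j ω < m - c).card : ℝ) < ((i:ℕ) : ℝ) + 1 := hr
      exact Nat.lt_succ_iff.mp (by exact_mod_cast this)
    have hUnat : (i : ℕ) + (Finset.univ.filter fun j => m + c < Y j ω).card + 1 ≤ k := by
      have hr : (i : ℝ) + ((Finset.univ.filter fun j => m + c < Y j ω).card : ℝ) + 1 < k := by
        have := (Nat.cast_le (α := ℝ)).2 hUB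
        rw [hεdef] at hωlt
        nlinarith
      have : (((i:ℕ) + (Finset.univ.filter fun j => m + c < Y j ω).card + 1 : ℕ) : ℝ) < (k : ℝ) := by
        push_cast
        linarith
      exact le_of_lt (by exact_mod_cast this)
    exact orderStat_mem k (fun j => Y j ω) m c i hLnat hUnat
  have hunion : (1:ENNReal) ≤ μ {ω | X ω < ε} + μ {ω | ε ≤ X ω} := by
    have hsub : (Set.univ : Set Ω) ⊆ {ω | X ω < ε} ∪ {ω | ε ≤ X ω} := by
      intro ω _
      rcases lt_or_ge (X ω) ε with h | h
      · exact Or.inl h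
      · exact Or.inr h
    calc (1:ENNReal) = μ Set.univ := measure_univ.symm
      _ ≤ μ ({ω | X ω < ε} ∪ {ω | ε ≤ X ω}) := measure_mono hsub
      _ ≤ _ := measure_union_le _ _
  calc ENNReal.ofReal (1 - Real.exp (-2 * k * (η - α) ^ 2))
      = 1 - ENNReal.ofReal (Real.exp (-2 * k * (η - α) ^ 2)) := by
        rw [ENNReal.ofReal_sub _ (Real.exp_pos _).le, ENNReal.ofReal_one]
    _ ≤ 1 - μ {ω | ε ≤ X ω} := tsub_le_tsub_left htail 1
    _ ≤ μ {ω | X ω < ε} := tsub_le_iff_right.mpr hunion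
    _ ≤ _ := measure_mono hsubset
end

section
/- Let L : ℝ^d → ℝ be convex and twice continuously differentiable with ℓ₂-Lipschitz Hessian (constant L₂). Suppose θ ∈ ℝ^d satisfies ∇²L(θ) ⪰ λI for some λ > 0, and let w ∈ ℝ^d satisfy ‖∇L(θ) + w‖ < λ²/(6L₂). Then the minimizer θ_w of L(·) + ⟨w, ·⟩ exists and satisfies ‖θ − θ_w‖ ≤ 2‖∇L(θ) + w‖/λ. -/
open Real Set

set_option maxHeartbeats 1000000

section TMLAux

private lemma tml_mono01 {f f' : ℝ → ℝ} (hf : ∀ t, HasDerivAt f (f' t) t)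
    (h0 : ∀ t ∈ Set.Icc (0:ℝ) 1, 0 ≤ f' t) : f 0 ≤ f 1 := by
  have := monotoneOn_of_deriv_nonneg (convex_Icc (0:ℝ) 1)
    (fun t _ => (hf t).continuousAt.continuousWithinAt)
    (fun t _ => (hf t).differentiableAt.differentiableWithinAt)
    (fun t ht => by rw [(hf t).deriv]; exact h0 t (interior_subset ht))
  exact this (Set.left_mem_Icc.mpr zero_le_one) (Set.right_mem_Icc.mpr zero_le_one) zero_le_one

variable {d : ℕ}

private lemma tml_hessBound (L : EuclideanSpace ℝ (Fin d) → ℝ) (L₂ lam : ℝ)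
    (hlip : ∀ u v, ‖fderiv ℝ (fderiv ℝ L) u - fderiv ℝ (fderiv ℝ L) v‖ ≤ L₂ * ‖u - v‖)
    (θ : EuclideanSpace ℝ (Fin d))
    (hpos : ∀ h : EuclideanSpace ℝ (Fin d), lam * ‖h‖ ^ 2 ≤ fderiv ℝ (fderiv ℝ L) θ h h)
    (u h : EuclideanSpace ℝ (Fin d)) :
    lam * ‖h‖ ^ 2 - L₂ * ‖u - θ‖ * ‖h‖ ^ 2 ≤ fderiv ℝ (fderiv ℝ L) u h h := by
  set D := fderiv ℝ (fderiv ℝ L) u - fderiv ℝ (fderiv ℝ L) θ with hD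
  have h1 : |D h h| ≤ L₂ * ‖u - θ‖ * (‖h‖ * ‖h‖) := by
    have h2 : ‖D h h‖ ≤ ‖D h‖ * ‖h‖ := (D h).le_opNorm h
    have h3 : ‖D h‖ ≤ ‖D‖ * ‖h‖ := D.le_opNorm h
    have h4 := hlip u θ
    have h5 : ‖D h‖ * ‖h‖ ≤ (L₂ * ‖u - θ‖) * (‖h‖ * ‖h‖) := by
      have := mul_le_mul_of_nonneg_right (h3.trans (mul_le_mul_of_nonneg_right h4 (norm_nonneg h)))
        (norm_nonneg h)
      calc ‖D h‖ * ‖h‖ ≤ (L₂ * ‖u - θ‖ * ‖h‖) * ‖h‖ := this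
        _ = (L₂ * ‖u - θ‖) * (‖h‖ * ‖h‖) := by ring
    calc |D h h| = ‖D h h‖ := rfl
      _ ≤ ‖D h‖ * ‖h‖ := h2
      _ ≤ _ := by linarith
  have h6 : fderiv ℝ (fderiv ℝ L) u h h = fderiv ℝ (fderiv ℝ L) θ h h + D h h := by
    simp [hD, ContinuousLinearMap.sub_apply]
  have h7 := hpos h
  have h8 := abs_le.mp h1
  nlinarith [sq_nonneg ‖h‖]

private lemma tml_lemB (L : EuclideanSpace ℝ (Fin d) → ℝ) (L₂ lam : ℝ)
    (hGd : Differentiable ℝ (fderiv ℝ L))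
    (hlip : ∀ u v, ‖fderiv ℝ (fderiv ℝ L) u - fderiv ℝ (fderiv ℝ L) v‖ ≤ L₂ * ‖u - v‖)
    (θ : EuclideanSpace ℝ (Fin d))
    (hpos : ∀ h : EuclideanSpace ℝ (Fin d), lam * ‖h‖ ^ 2 ≤ fderiv ℝ (fderiv ℝ L) θ h h)
    (h : EuclideanSpace ℝ (Fin d)) :
    fderiv ℝ L θ h + lam * ‖h‖ ^ 2 - L₂ / 2 * ‖h‖ ^ 3 ≤ fderiv ℝ L (θ + h) h := by
  have key := tml_mono01
    (f := fun t => fderiv ℝ L (θ + t • h) h - lam * t * ‖h‖ ^ 2 + L₂ * t ^ 2 * ‖h‖ ^ 3 / 2)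
    (f' := fun t => fderiv ℝ (fderiv ℝ L) (θ + t • h) h h - lam * ‖h‖ ^ 2 + L₂ * t * ‖h‖ ^ 3)
    (fun t => by
      have hc : HasDerivAt (fun s : ℝ => θ + s • h) h t := by
        simpa using ((hasDerivAt_id t).smul_const h).const_add θ
      have h1 : HasDerivAt (fun s : ℝ => fderiv ℝ L (θ + s • h) h)
          (fderiv ℝ (fderiv ℝ L) (θ + t • h) h h) t := by
        have h1' : HasDerivAt (fun s : ℝ => fderiv ℝ L (θ + s • h))
            (fderiv ℝ (fderiv ℝ L) (θ + t • h) h) t :=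
          (hGd _).hasFDerivAt.comp_hasDerivAt t hc
        simpa using h1'.clm_apply (hasDerivAt_const t h)
      have h2 : HasDerivAt (fun s : ℝ => lam * s * ‖h‖ ^ 2) (lam * ‖h‖ ^ 2) t := by
        simpa using ((hasDerivAt_id t).const_mul lam).mul_const (‖h‖ ^ 2)
      have h3 : HasDerivAt (fun s : ℝ => L₂ * s ^ 2 * ‖h‖ ^ 3 / 2) (L₂ * t * ‖h‖ ^ 3) t := by
        have := (((hasDerivAt_pow 2 t).const_mul L₂).mul_const (‖h‖ ^ 3)).div_const 2
        exact this.congr_deriv (by ring)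
      exact (h1.sub h2).add h3)
    (fun t ht => by
      have hb := tml_hessBound L L₂ lam hlip θ hpos (θ + t • h) h
      have he : ‖θ + t • h - θ‖ = t * ‖h‖ := by
        rw [add_sub_cancel_left, norm_smul, Real.norm_of_nonneg ht.1]
      rw [he] at hb
      show 0 ≤ fderiv ℝ (fderiv ℝ L) (θ + t • h) h h - lam * ‖h‖ ^ 2 + L₂ * t * ‖h‖ ^ 3
      have he2 : L₂ * (t * ‖h‖) * ‖h‖ ^ 2 = L₂ * t * ‖h‖ ^ 3 := by ring
      linarith)
  simp only [zero_smul, add_zero, one_smul, mul_zero, zero_mul, mul_one, one_pow,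
    ne_eq, OfNat.ofNat_ne_zero, not_false_eq_true, zero_pow, sub_zero] at key
  linarith

private lemma tml_lemA (L : EuclideanSpace ℝ (Fin d) → ℝ) (L₂ lam : ℝ)
    (hLd : Differentiable ℝ L) (hGd : Differentiable ℝ (fderiv ℝ L))
    (hlip : ∀ u v, ‖fderiv ℝ (fderiv ℝ L) u - fderiv ℝ (fderiv ℝ L) v‖ ≤ L₂ * ‖u - v‖)
    (θ : EuclideanSpace ℝ (Fin d))
    (hpos : ∀ h : EuclideanSpace ℝ (Fin d), lam * ‖h‖ ^ 2 ≤ fderiv ℝ (fderiv ℝ L) θ h h)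
    (h : EuclideanSpace ℝ (Fin d)) :
    L θ + fderiv ℝ L θ h + lam / 2 * ‖h‖ ^ 2 - L₂ / 6 * ‖h‖ ^ 3 ≤ L (θ + h) := by
  have key := tml_mono01
    (f := fun t => L (θ + t • h) - fderiv ℝ L θ h * t - lam * t ^ 2 * ‖h‖ ^ 2 / 2
      + L₂ * t ^ 3 * ‖h‖ ^ 3 / 6)
    (f' := fun t => fderiv ℝ L (θ + t • h) h - fderiv ℝ L θ h - lam * t * ‖h‖ ^ 2
      + L₂ * t ^ 2 * ‖h‖ ^ 3 / 2)
    (fun t => by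
      have hc : HasDerivAt (fun s : ℝ => θ + s • h) h t := by
        simpa using ((hasDerivAt_id t).smul_const h).const_add θ
      have h1 : HasDerivAt (fun s : ℝ => L (θ + s • h)) (fderiv ℝ L (θ + t • h) h) t :=
        (hLd _).hasFDerivAt.comp_hasDerivAt t hc
      have h2 : HasDerivAt (fun s : ℝ => fderiv ℝ L θ h * s) (fderiv ℝ L θ h) t := by
        simpa using (hasDerivAt_id t).const_mul (fderiv ℝ L θ h)
      have h3 : HasDerivAt (fun s : ℝ => lam * s ^ 2 * ‖h‖ ^ 2 / 2) (lam * t * ‖h‖ ^ 2) t := by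
        have := (((hasDerivAt_pow 2 t).const_mul lam).mul_const (‖h‖ ^ 2)).div_const 2
        exact this.congr_deriv (by ring)
      have h4 : HasDerivAt (fun s : ℝ => L₂ * s ^ 3 * ‖h‖ ^ 3 / 6) (L₂ * t ^ 2 * ‖h‖ ^ 3 / 2) t := by
        have := (((hasDerivAt_pow 3 t).const_mul L₂).mul_const (‖h‖ ^ 3)).div_const 6
        exact this.congr_deriv (by ring)
      exact ((h1.sub h2).sub h3).add h4)
    (fun t ht => by
      rcases ht.1.eq_or_lt with h0 | h0
      · simp [← h0]
      · have hb := tml_lemB L L₂ lam hGd hlip θ hpos (t • h)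
        have hn : ‖t • h‖ = t * ‖h‖ := by rw [norm_smul, Real.norm_of_nonneg h0.le]
        rw [hn] at hb
        have hm1 : fderiv ℝ L θ (t • h) = t * fderiv ℝ L θ h := by
          rw [map_smul]; simp
        have hm2 : fderiv ℝ L (θ + t • h) (t • h) = t * fderiv ℝ L (θ + t • h) h := by
          rw [map_smul]; simp
        rw [hm1, hm2] at hb
        have h9 : 0 ≤ t * (fderiv ℝ L (θ + t • h) h - fderiv ℝ L θ h - lam * t * ‖h‖ ^ 2
            + L₂ * t ^ 2 * ‖h‖ ^ 3 / 2) := by nlinarith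
        show 0 ≤ fderiv ℝ L (θ + t • h) h - fderiv ℝ L θ h - lam * t * ‖h‖ ^ 2
            + L₂ * t ^ 2 * ‖h‖ ^ 3 / 2
        exact nonneg_of_mul_nonneg_right h9 h0)
  simp only [zero_smul, add_zero, one_smul, mul_zero, zero_mul, mul_one, one_pow,
    ne_eq, OfNat.ofNat_ne_zero, not_false_eq_true, zero_pow, sub_zero, zero_div] at key
  linarith

end TMLAux

/-- Localization of minimizers of tilted convex functions.  Let `L : ℝ^d → ℝ` be convex and
`C²` with `L₂`-Lipschitz Hessian.  If `∇²L(θ) ⪰ λ I` and `‖∇L(θ) + w‖ < λ²/(6 L₂)`, then the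
minimizer `θ_w` of `L(·) + ⟨w, ·⟩` exists and every such minimizer satisfies
`‖θ − θ_w‖ ≤ 2‖∇L(θ) + w‖/λ`. -/
theorem tilted_minimizer_localization {d : ℕ}
    (L : EuclideanSpace ℝ (Fin d) → ℝ) (L₂ lam : ℝ) (hlam : 0 < lam) (hL₂ : 0 < L₂)
    (hconv : ConvexOn ℝ Set.univ L) (hsmooth : ContDiff ℝ 2 L)
    (hlip : ∀ u v, ‖fderiv ℝ (fderiv ℝ L) u - fderiv ℝ (fderiv ℝ L) v‖ ≤ L₂ * ‖u - v‖)
    (θ : EuclideanSpace ℝ (Fin d))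
    (hpos : ∀ h : EuclideanSpace ℝ (Fin d), lam * ‖h‖ ^ 2 ≤ fderiv ℝ (fderiv ℝ L) θ h h)
    (w : EuclideanSpace ℝ (Fin d))
    (hw : ‖gradient L θ + w‖ < lam ^ 2 / (6 * L₂)) :
    (∃ θw, IsMinOn (fun u => L u + (inner ℝ w u : ℝ)) Set.univ θw)
      ∧ ∀ θw, IsMinOn (fun u => L u + (inner ℝ w u : ℝ)) Set.univ θw →
          ‖θ - θw‖ ≤ 2 * ‖gradient L θ + w‖ / lam := by
  have hLd : Differentiable ℝ L := hsmooth.differentiable (by norm_num)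
  have hGd : Differentiable ℝ (fderiv ℝ L) :=
    (hsmooth.fderiv_right (m := 1) (by norm_num)).differentiable (by norm_num)
  set ε := ‖gradient L θ + w‖ with hεdef
  have hε0 : 0 ≤ ε := norm_nonneg _
  set r : ℝ := lam / (2 * L₂) with hrdef
  have hr0 : 0 < r := by positivity
  set F : EuclideanSpace ℝ (Fin d) → ℝ := fun u => L u + (inner ℝ w u : ℝ) with hFdef
  have hgrad : ∀ v, (inner ℝ (gradient L θ) v : ℝ) = fderiv ℝ L θ v := by
    intro v
    have h1 : HasGradientAt L ((InnerProductSpace.toDual ℝ _).symm (fderiv ℝ L θ)) θ :=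
      hasFDerivAt_iff_hasGradientAt.mp (hLd θ).hasFDerivAt
    rw [h1.gradient]
    exact InnerProductSpace.toDual_symm_apply
  -- strict increase on the sphere of radius r
  have hsphere : ∀ h : EuclideanSpace ℝ (Fin d), ‖h‖ = r → F θ < F (θ + h) := by
    intro h hh
    have hA := tml_lemA L L₂ lam hLd hGd hlip θ hpos h
    rw [hh] at hA
    have hinner : (inner ℝ (gradient L θ + w) h : ℝ) = fderiv ℝ L θ h + (inner ℝ w h : ℝ) := by
      rw [inner_add_left, hgrad]
    have habs : |(inner ℝ (gradient L θ + w) h : ℝ)| ≤ ε * r := by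
      have := abs_real_inner_le_norm (gradient L θ + w) h
      rw [hh] at this
      exact this
    have hlow : -(ε * r) ≤ fderiv ℝ L θ h + (inner ℝ w h : ℝ) := by
      rw [← hinner]; exact (abs_le.mp habs).1
    have hquad : ε * r < lam / 2 * r ^ 2 - L₂ / 6 * r ^ 3 := by
      rw [hrdef]
      have h6 : ε * (6 * L₂) < lam ^ 2 := (lt_div_iff₀ (by positivity)).mp hw
      rw [div_pow, div_pow, ← sub_pos]
      have expand : lam / 2 * (lam ^ 2 / (2 * L₂) ^ 2) - L₂ / 6 * (lam ^ 3 / (2 * L₂) ^ 3)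
          - ε * (lam / (2 * L₂)) = (5 * lam ^ 3 - 24 * L₂ * ε * lam) / (48 * L₂ ^ 2) := by
        field_simp
        ring
      rw [expand]
      apply div_pos ?_ (by positivity)
      nlinarith [mul_lt_mul_of_pos_right h6 hlam, pow_pos hlam 3]
    have hiw : (inner ℝ w (θ + h) : ℝ) = (inner ℝ w θ : ℝ) + (inner ℝ w h : ℝ) := inner_add_right w θ h
    simp only [hFdef]
    rw [hiw]
    linarith
  -- convexity of F
  have hFconv : ConvexOn ℝ univ F := by
    refine hconv.add ⟨convex_univ, ?_⟩
    intro x _ y _ a b _ _ _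
    have : (inner ℝ w (a • x + b • y) : ℝ) = a * (inner ℝ w x : ℝ) + b * (inner ℝ w y : ℝ) := by
      rw [inner_add_right, real_inner_smul_right, real_inner_smul_right]
    rw [this]
    simp [smul_eq_mul]
  -- any point outside the ball of radius r has strictly bigger F value than θ
  have hout : ∀ u : EuclideanSpace ℝ (Fin d), r ≤ ‖u - θ‖ → F θ < F u := by
    intro u hu
    have hu0 : 0 < ‖u - θ‖ := lt_of_lt_of_le hr0 hu
    set t : ℝ := r / ‖u - θ‖ with htdef
    have ht0 : 0 < t := by positivity
    have ht1 : t ≤ 1 := by rw [div_le_one hu0]; exact hu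
    have hh : ‖t • (u - θ)‖ = r := by
      rw [norm_smul, Real.norm_of_nonneg ht0.le, htdef]
      field_simp
    have hsph := hsphere (t • (u - θ)) hh
    have hcomb : θ + t • (u - θ) = (1 - t) • θ + t • u := by module
    rw [hcomb] at hsph
    have hcv := hFconv.2 (mem_univ θ) (mem_univ u) (by linarith : (0:ℝ) ≤ 1 - t) ht0.le
      (by ring : (1 - t) + t = 1)
    have hkey : t * F θ < t * F u := by
      have h5 := lt_of_lt_of_le hsph hcv
      simp only [smul_eq_mul] at h5
      nlinarith [h5]
    exact lt_of_mul_lt_mul_left hkey ht0.le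
  -- existence of a global minimizer
  have hFcont : Continuous F := by
    exact hsmooth.continuous.add (continuous_const.inner continuous_id)
  obtain ⟨θ₀, hθ₀mem, hθ₀min⟩ := (isCompact_closedBall θ r).exists_isMinOn
    (Metric.nonempty_closedBall.mpr hr0.le) hFcont.continuousOn
  have hθ₀glob : IsMinOn F univ θ₀ := by
    rw [isMinOn_iff]
    intro u _
    rcases le_or_gt ‖u - θ‖ r with hcase | hcase
    · exact isMinOn_iff.mp hθ₀min u (Metric.mem_closedBall.mpr (by rw [dist_eq_norm]; exact hcase))
    · have h1 := hout u hcase.le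
      have h2 : F θ₀ ≤ F θ := isMinOn_iff.mp hθ₀min θ (Metric.mem_closedBall_self hr0.le)
      linarith
  refine ⟨⟨θ₀, hθ₀glob⟩, ?_⟩
  -- the bound for every minimizer
  intro θw hmin
  have hball : ‖θw - θ‖ < r := by
    by_contra hcon
    push_neg at hcon
    have h1 := hout θw hcon
    have h2 : F θw ≤ F θ := isMinOn_iff.mp hmin θ (mem_univ θ)
    linarith
  have hloc : IsLocalMin F θw := by
    have := hmin.isLocalMin (Filter.univ_mem)
    exact this
  have hF' : HasFDerivAt F (fderiv ℝ L θw + innerSL ℝ w) θw :=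
    (hLd θw).hasFDerivAt.add (innerSL ℝ w).hasFDerivAt
  have hzero := hloc.hasFDerivAt_eq_zero hF'
  have hfw : ∀ v, fderiv ℝ L θw v = -(inner ℝ w v : ℝ) := by
    intro v
    have := congrArg (fun A => A v) hzero
    simp only [ContinuousLinearMap.add_apply, ContinuousLinearMap.zero_apply,
      innerSL_apply_apply] at this
    linarith
  set h : EuclideanSpace ℝ (Fin d) := θw - θ with hhdef
  have hθh : θ + h = θw := by rw [hhdef]; abel
  have hB := tml_lemB L L₂ lam hGd hlip θ hpos h
  rw [hθh, hfw h] at hB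
  have hinner : (inner ℝ (gradient L θ + w) h : ℝ) = fderiv ℝ L θ h + (inner ℝ w h : ℝ) := by
    rw [inner_add_left, hgrad]
  have habs : |(inner ℝ (gradient L θ + w) h : ℝ)| ≤ ε * ‖h‖ := by
    have := abs_real_inner_le_norm (gradient L θ + w) h
    exact this
  have hlow := (abs_le.mp habs).1
  rw [hinner] at hlow
  -- lam‖h‖² − L₂/2‖h‖³ ≤ ε‖h‖
  have hmain : lam * ‖h‖ ^ 2 - L₂ / 2 * ‖h‖ ^ 3 ≤ ε * ‖h‖ := by linarith
  have hgoal : ‖h‖ ≤ 2 * ε / lam := by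
    rcases (norm_nonneg h).eq_or_lt with h0 | h0
    · rw [← h0]; positivity
    · have hn3 : ‖h‖ ^ 3 = ‖h‖ ^ 2 * ‖h‖ := by ring
      have hrr : L₂ * ‖h‖ < lam / 2 := by
        have := hball
        rw [hrdef] at this
        calc L₂ * ‖h‖ < L₂ * (lam / (2 * L₂)) :=
          mul_lt_mul_of_pos_left (by rw [hhdef]; exact this) hL₂
        _ = lam / 2 := by field_simp
      rw [le_div_iff₀ hlam]
      nlinarith [mul_pos h0 h0, sq_nonneg ‖h‖, hmain, hrr, h0]
  rw [norm_sub_rev] at hgoal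
  exact hgoal
end

section
/- Let L : ℝ^d → ℝ be convex, twice continuously differentiable with L₂-Lipschitz Hessian, let θ* = argmin L, suppose ∇²L(θ*) ⪰ λI with λ > 0, and let w ∈ ℝ^d satisfy ‖w‖ < λ²/(6L₂). Then θ_w = argmin_θ {L(θ) + ⟨w, θ⟩} satisfies ‖θ_w − θ*‖ ≤ 2‖w‖/λ. -/
open Real Set

set_option maxHeartbeats 1000000

/-- Perturbation of convex minimizers: if `L : ℝ^d → ℝ` is convex and `C²` with
`L₂`-Lipschitz Hessian, `θ*` minimizes `L`, `∇²L(θ*) ⪰ λ I` with `λ > 0`, and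
`‖w‖ < λ²/(6 L₂)`, then any minimizer `θ_w` of `L(·) + ⟨w, ·⟩` satisfies
`‖θ_w − θ*‖ ≤ 2‖w‖/λ`. -/
theorem tilted_minimizer_perturbation {d : ℕ}
    (L : EuclideanSpace ℝ (Fin d) → ℝ) (L₂ lam : ℝ) (hlam : 0 < lam) (hL₂ : 0 < L₂)
    (hconv : ConvexOn ℝ Set.univ L) (hsmooth : ContDiff ℝ 2 L)
    (hlip : ∀ u v, ‖fderiv ℝ (fderiv ℝ L) u - fderiv ℝ (fderiv ℝ L) v‖ ≤ L₂ * ‖u - v‖)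
    (θstar : EuclideanSpace ℝ (Fin d)) (hmin : IsMinOn L Set.univ θstar)
    (hpos : ∀ h : EuclideanSpace ℝ (Fin d), lam * ‖h‖ ^ 2 ≤ fderiv ℝ (fderiv ℝ L) θstar h h)
    (w : EuclideanSpace ℝ (Fin d)) (hw : ‖w‖ < lam ^ 2 / (6 * L₂))
    (θw : EuclideanSpace ℝ (Fin d))
    (hminw : IsMinOn (fun u => L u + (inner ℝ w u : ℝ)) Set.univ θw) :
    ‖θw - θstar‖ ≤ 2 * ‖w‖ / lam := by
  set h : EuclideanSpace ℝ (Fin d) := θw - θstar with hh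
  set r : ℝ := ‖h‖ with hr
  -- differentiability facts
  have hdL : Differentiable ℝ L := hsmooth.differentiable (by norm_num)
  have hdL' : ContDiff ℝ 1 (fderiv ℝ L) := hsmooth.fderiv_right (by norm_num)
  have hdL'd : Differentiable ℝ (fderiv ℝ L) := hdL'.differentiable (by norm_num)
  -- curve
  set γ : ℝ → EuclideanSpace ℝ (Fin d) := fun t => θstar + t • h with hγ
  have hγd : ∀ t : ℝ, HasDerivAt γ h t := by
    intro t
    simpa [hγ] using ((hasDerivAt_id t).smul_const h).const_add θstar
  -- ψ t = fderiv L (γ t) h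
  set ψ : ℝ → ℝ := fun t => fderiv ℝ L (γ t) h with hψ
  have hψd : ∀ t : ℝ, HasDerivAt ψ (fderiv ℝ (fderiv ℝ L) (γ t) h h) t := by
    intro t
    have h1 : HasDerivAt (fun t => fderiv ℝ L (γ t)) (fderiv ℝ (fderiv ℝ L) (γ t) h) t :=
      ((hdL'd (γ t)).hasFDerivAt).comp_hasDerivAt t (hγd t)
    have := h1.clm_apply (hasDerivAt_const t h)
    simpa using this
  -- fderiv L θstar = 0
  have hstar0 : fderiv ℝ L θstar = 0 := by
    have : IsLocalMin L θstar := Filter.Eventually.of_forall fun y => hmin (Set.mem_univ y)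
    exact this.fderiv_eq_zero
  -- fderiv L θw = - innerSL w
  have hgw : HasFDerivAt (fun u => L u + (inner ℝ w u : ℝ))
      (fderiv ℝ L θw + innerSL ℝ w) θw :=
    (hdL θw).hasFDerivAt.add (innerSL ℝ w).hasFDerivAt
  have hw0 : fderiv ℝ L θw + innerSL ℝ w = 0 := by
    have hloc : IsLocalMin (fun u => L u + (inner ℝ w u : ℝ)) θw :=
      Filter.Eventually.of_forall fun y => hminw (Set.mem_univ y)
    rw [← hgw.fderiv]
    exact hloc.fderiv_eq_zero
  have hψ1 : ψ 1 = -(inner ℝ w h : ℝ) := by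
    have := congrArg (fun A : EuclideanSpace ℝ (Fin d) →L[ℝ] ℝ => A h) hw0
    simp only [ContinuousLinearMap.add_apply, ContinuousLinearMap.zero_apply] at this
    have hγ1 : γ 1 = θw := by simp [hγ, hh]
    simp only [hψ, hγ1]
    rw [innerSL_apply_apply] at this
    linarith
  -- φ = g ∘ γ is convex, deriv monotone
  set g : EuclideanSpace ℝ (Fin d) → ℝ := fun u => L u + (inner ℝ w u : ℝ) with hg
  have hgconv : ConvexOn ℝ Set.univ g := by
    have := hconv.add ((innerSL ℝ w).toLinearMap.convexOn convex_univ)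
    exact this
  set γA : ℝ →ᵃ[ℝ] EuclideanSpace ℝ (Fin d) := AffineMap.lineMap θstar θw with hγA
  have hγAeq : ∀ t, γA t = γ t := by
    intro t; simp [hγA, hγ, hh, AffineMap.lineMap_apply]; module
  have hφconv : ConvexOn ℝ Set.univ (g ∘ γA) := by
    have := hgconv.comp_affineMap γA
    simpa using this
  have hφd : ∀ t : ℝ, HasDerivAt (g ∘ γA) (ψ t + (inner ℝ w h : ℝ)) t := by
    intro t
    have h1 : HasDerivAt (fun s => g (γ s)) (ψ t + (inner ℝ w h : ℝ)) t := by
      have hL1 : HasDerivAt (fun s => L (γ s)) (ψ t) t :=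
        (hdL (γ t)).hasFDerivAt.comp_hasDerivAt t (hγd t)
      have hI : HasDerivAt (fun s => (inner ℝ w (γ s) : ℝ)) ((inner ℝ w h : ℝ)) t := by
        have := (innerSL ℝ w).hasFDerivAt.comp_hasDerivAt t (hγd t)
        exact this
      exact hL1.add hI
    have : (fun s => g (γ s)) = g ∘ γA := by
      funext s; simp [Function.comp, hγAeq]
    rwa [this] at h1
  have hmono : Monotone (deriv (g ∘ γA)) := by
    have := hφconv.monotoneOn_deriv (fun x _ => (hφd x).differentiableAt)
    intro a b hab
    exact this (Set.mem_univ a) (Set.mem_univ b) hab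
  have hψmono : ∀ t : ℝ, t ≤ 1 → ψ t ≤ ψ 1 := by
    intro t ht
    have h1 := hmono ht
    rw [(hφd t).deriv, (hφd 1).deriv] at h1
    linarith
  -- ψ 1 ≤ ‖w‖ r
  have hψ1le : ψ 1 ≤ ‖w‖ * r := by
    rw [hψ1]
    calc -(inner ℝ w h : ℝ) ≤ |(inner ℝ w h : ℝ)| := neg_le_abs _
    _ ≤ ‖w‖ * ‖h‖ := abs_real_inner_le_norm w h
  -- lower bound on ψ' for t ≥ 0
  have hψ'lb : ∀ t : ℝ, 0 ≤ t → lam * r ^ 2 - L₂ * t * r ^ 3 ≤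
      fderiv ℝ (fderiv ℝ L) (γ t) h h := by
    intro t ht
    have hd : ‖γ t - θstar‖ = t * r := by
      simp [hγ, norm_smul, abs_of_nonneg ht, hr]
    have h1 : ‖fderiv ℝ (fderiv ℝ L) (γ t) - fderiv ℝ (fderiv ℝ L) θstar‖ ≤ L₂ * (t * r) := by
      have := hlip (γ t) θstar
      rwa [hd] at this
    have h2 : |((fderiv ℝ (fderiv ℝ L) (γ t) - fderiv ℝ (fderiv ℝ L) θstar) h) h|
        ≤ L₂ * (t * r) * r * r := by
      calc |((fderiv ℝ (fderiv ℝ L) (γ t) - fderiv ℝ (fderiv ℝ L) θstar) h) h|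
          ≤ ‖(fderiv ℝ (fderiv ℝ L) (γ t) - fderiv ℝ (fderiv ℝ L) θstar) h‖ * ‖h‖ :=
            ((fderiv ℝ (fderiv ℝ L) (γ t) - fderiv ℝ (fderiv ℝ L) θstar) h).le_opNorm h
        _ ≤ ‖fderiv ℝ (fderiv ℝ L) (γ t) - fderiv ℝ (fderiv ℝ L) θstar‖ * ‖h‖ * ‖h‖ := by
            gcongr
            exact (fderiv ℝ (fderiv ℝ L) (γ t) - fderiv ℝ (fderiv ℝ L) θstar).le_opNorm h
        _ ≤ L₂ * (t * r) * r * r := by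
            rw [← hr]; gcongr
    have h3 := hpos h
    have h4 : ((fderiv ℝ (fderiv ℝ L) (γ t) - fderiv ℝ (fderiv ℝ L) θstar) h) h =
        fderiv ℝ (fderiv ℝ L) (γ t) h h - fderiv ℝ (fderiv ℝ L) θstar h h := by
      simp
    rw [h4] at h2
    rw [← hr] at h3
    have h5 := (abs_le.mp h2).1
    have h6 : L₂ * (t * r) * r * r = L₂ * t * r ^ 3 := by ring
    rw [h6] at h5
    linarith
  -- integrate: ψ t ≥ lam t r² - L₂ t² r³ / 2 on [0,1]
  have hψlb : ∀ t : ℝ, t ∈ Set.Icc (0:ℝ) 1 →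
      lam * t * r ^ 2 - L₂ * t ^ 2 * r ^ 3 / 2 ≤ ψ t := by
    set χ : ℝ → ℝ := fun t => ψ t - (lam * t * r ^ 2 - L₂ * t ^ 2 * r ^ 3 / 2) with hχ
    have hχd : ∀ t : ℝ, HasDerivAt χ
        (fderiv ℝ (fderiv ℝ L) (γ t) h h - (lam * r ^ 2 - L₂ * t * r ^ 3)) t := by
      intro t
      have hpoly : HasDerivAt (fun t : ℝ => lam * t * r ^ 2 - L₂ * t ^ 2 * r ^ 3 / 2)
          (lam * r ^ 2 - L₂ * t * r ^ 3) t := by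
        have := ((hasDerivAt_id t).const_mul lam).mul_const (r ^ 2) |>.sub
          ((((hasDerivAt_pow 2 t).const_mul L₂).mul_const (r ^ 3)).div_const 2)
        have this' : HasDerivAt (fun t : ℝ => lam * t * r ^ 2 - L₂ * t ^ 2 * r ^ 3 / 2) _ t := this
        convert this' using 1
        ring
      exact (hψd t).sub hpoly
    have hχmono : MonotoneOn χ (Set.Icc (0:ℝ) 1) := by
      apply monotoneOn_of_deriv_nonneg (convex_Icc 0 1)
        (fun x _ => (hχd x).differentiableAt.continuousAt.continuousWithinAt)
        (fun x _ => (hχd x).differentiableAt.differentiableWithinAt)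
      intro x hx
      rw [interior_Icc] at hx
      rw [(hχd x).deriv]
      have := hψ'lb x (le_of_lt hx.1)
      linarith
    intro t ht
    have h0 : χ 0 ≤ χ t := hχmono (Set.mem_Icc.mpr ⟨le_refl 0, zero_le_one⟩) ht ht.1
    have hχ0 : χ 0 = 0 := by
      have : ψ 0 = 0 := by simp [hψ, hγ, hstar0]
      simp [hχ, this]
    rw [hχ0] at h0
    simp only [hχ] at h0
    linarith
  -- key inequality for all t ∈ [0,1]
  have key : ∀ t : ℝ, t ∈ Set.Icc (0:ℝ) 1 →
      lam * t * r ^ 2 - L₂ * t ^ 2 * r ^ 3 / 2 ≤ ‖w‖ * r := by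
    intro t ht
    exact (hψlb t ht).trans ((hψmono t ht.2).trans hψ1le)
  -- conclude
  by_contra hcon
  push_neg at hcon
  have hwnn : (0:ℝ) ≤ ‖w‖ := norm_nonneg w
  have hrpos : 0 < r := by
    have : 0 ≤ 2 * ‖w‖ / lam := by positivity
    linarith
  have hwr : ‖w‖ < lam * r / 2 := by
    rw [div_lt_iff₀ hlam] at hcon
    linarith
  rcases le_or_gt (L₂ * r) lam with hc | hc
  · have := key 1 (Set.mem_Icc.mpr ⟨zero_le_one, le_refl 1⟩)
    nlinarith
  · have htmem : lam / (L₂ * r) ∈ Set.Icc (0:ℝ) 1 := by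
      constructor
      · positivity
      · rw [div_le_one (by positivity)]; linarith
    have := key _ htmem
    have heq : lam * (lam / (L₂ * r)) * r ^ 2 - L₂ * (lam / (L₂ * r)) ^ 2 * r ^ 3 / 2
        = lam ^ 2 * r / (2 * L₂) := by
      field_simp
      ring
    rw [heq] at this
    rw [div_le_iff₀ (by positivity : (0:ℝ) < 2 * L₂)] at this
    have hww : ‖w‖ * (6 * L₂) < lam ^ 2 := by
      rw [lt_div_iff₀ (by positivity)] at hw; linarith
    nlinarith [mul_pos (mul_pos hlam hlam) hrpos]
end

section
/- Let A₁,…,A_n be d×d Hermitian matrices with Σᵢ Aᵢ = 0, let π be a uniformly random permutation of {1,…,n}, and let X = Σ_{i=1}^m A_{π(i)} for some m ≤ n. Let π' be obtained from π by swapping two elements chosen uniformly at random, and X' = Σ_{i=1}^m A_{π'(i)}. Then E[X − X' | π] = (2/(n−1))·X, i.e., (X, X') forms a matrix Stein pair with α = 2/(n−1). -/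
open Finset

/-- The subsampled sum `X(σ) = Σ_{i=1}^m A_{σ(i)}`. -/
noncomputable def subsampleSum {n d : ℕ} (m : ℕ) (A : Fin n → Matrix (Fin d) (Fin d) ℂ)
    (σ : Equiv.Perm (Fin n)) : Matrix (Fin d) (Fin d) ℂ :=
  ∑ i : Fin n, if (i : ℕ) < m then A (σ i) else 0

/-- Matrix Stein pair from subsampling: if `A₁, …, A_n` are Hermitian with `Σᵢ Aᵢ = 0`,
`X = Σ_{i=1}^m A_{π(i)}`, and `X'` is obtained by swapping two uniformly random positions
of `π`, then `E[X − X' | π] = (2/(n−1))·X`: averaging `X − X'` over the uniformly random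
transposed pair equals `(2/(n−1)) X`. -/
theorem matrix_stein_pair {n d m : ℕ} (hn : 2 ≤ n) (hm : m ≤ n)
    (A : Fin n → Matrix (Fin d) (Fin d) ℂ) (hherm : ∀ i, (A i).IsHermitian)
    (hsum : ∑ i, A i = 0) (π : Equiv.Perm (Fin n)) :
    (((n : ℂ) * ((n : ℂ) - 1))⁻¹ •
        ∑ J : Fin n, ∑ K : Fin n,
          if J ≠ K then
            subsampleSum m A π - subsampleSum m A (π * Equiv.swap J K)
          else 0)
      = (2 / ((n : ℂ) - 1)) • subsampleSum m A π := by
  classical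
  have hπ0 : ∑ K : Fin n, A (π K) = 0 := by
    rw [Equiv.sum_comp π A]; exact hsum
  have key : ∀ J K : Fin n,
      (if J ≠ K then subsampleSum m A π - subsampleSum m A (π * Equiv.swap J K) else 0)
      = ((if (J : ℕ) < m then A (π J) else 0) - (if (J : ℕ) < m then A (π K) else 0))
        + ((if (K : ℕ) < m then A (π K) else 0) - (if (K : ℕ) < m then A (π J) else 0)) := by
    intro J K
    by_cases hJK : J = K
    · subst hJK; simp
    · rw [if_pos hJK]
      unfold subsampleSum
      rw [← Finset.sum_sub_distrib]
      have hzero : ∀ i ∈ (Finset.univ : Finset (Fin n)), i ∉ ({J, K} : Finset (Fin n)) →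
          ((if (i : ℕ) < m then A (π i) else 0) -
            (if (i : ℕ) < m then A ((π * Equiv.swap J K) i) else 0)) = 0 := by
        intro i _ hi
        simp only [Finset.mem_insert, Finset.mem_singleton, not_or] at hi
        have h : (π * Equiv.swap J K) i = π i := by
          simp [Equiv.Perm.mul_apply, Equiv.swap_apply_of_ne_of_ne hi.1 hi.2]
        rw [h, sub_self]
      rw [← Finset.sum_subset (Finset.subset_univ ({J, K} : Finset (Fin n))) hzero,
        Finset.sum_pair hJK]
      simp only [Equiv.Perm.mul_apply, Equiv.swap_apply_left, Equiv.swap_apply_right]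
  simp only [key]
  have e1 : ∀ J : Fin n, ∑ K : Fin n, (if (J : ℕ) < m then A (π K) else 0) = 0 := by
    intro J
    by_cases h : (J : ℕ) < m
    · simp only [if_pos h]; exact hπ0
    · simp [h]
  have e2 : ∑ J : Fin n, ∑ K : Fin n, (if (K : ℕ) < m then A (π J) else 0) = 0 := by
    rw [Finset.sum_comm]
    refine Finset.sum_eq_zero fun K _ => ?_
    by_cases h : (K : ℕ) < m
    · simp only [if_pos h]; exact hπ0
    · simp [h]
  have eX : ∀ J : Fin n, ∑ K : Fin n, (if (K : ℕ) < m then A (π K) else 0)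
      = subsampleSum m A π := fun J => rfl
  simp only [Finset.sum_add_distrib, Finset.sum_sub_distrib, e1, e2, eX,
    Finset.sum_const, Finset.card_univ, Fintype.card_fin, sub_zero]
  -- Now goal: (↑n * (↑n - 1))⁻¹ • (∑ J, n • (if ...) ... ) form
  have hXsum : ∑ J : Fin n, (if (J : ℕ) < m then A (π J) else 0) = subsampleSum m A π := rfl
  rw [← Finset.smul_sum, hXsum]
  have hn0 : (n : ℂ) ≠ 0 := Nat.cast_ne_zero.mpr (by omega)
  have hn1 : (n : ℂ) - 1 ≠ 0 :=
    sub_ne_zero.mpr (by exact_mod_cast (by omega : n ≠ 1))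
  rw [← Nat.cast_smul_eq_nsmul ℂ n (subsampleSum m A π), ← add_smul, smul_smul]
  congr 1
  field_simp
  ring
end

section
/- Let A₁,…,A_n be d×d Hermitian matrices with Σᵢ Aᵢ = 0 and ‖Aᵢ − A_j‖_op ≤ b for all i,j. Let π be a uniformly random permutation of {1,…,n} and X = Σ_{i=1}^m A_{π(i)}. Then for all t ≥ 0, P(λ_min(X) ≤ −t) ≤ d·exp(−t²/(m b²)) and P(λ_max(X) ≥ t) ≤ d·exp(−t²/(m b²)). -/
open Finset Real Matrix

variable {d : ℕ} {H A B : Matrix (Fin d) (Fin d) ℂ}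

noncomputable def mexp (θ : ℝ) (hH : H.IsHermitian) : Matrix (Fin d) (Fin d) ℂ :=
  (hH.eigenvectorUnitary : Matrix (Fin d) (Fin d) ℂ) *
    Matrix.diagonal (fun i => (Real.exp (θ * hH.eigenvalues i) : ℂ)) *
    star (hH.eigenvectorUnitary : Matrix (Fin d) (Fin d) ℂ)

lemma unit1 (hH : H.IsHermitian) :
    (hH.eigenvectorUnitary : Matrix (Fin d) (Fin d) ℂ) * star (hH.eigenvectorUnitary : Matrix (Fin d) (Fin d) ℂ) = 1 :=
  Matrix.mem_unitaryGroup_iff.mp hH.eigenvectorUnitary.2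

lemma unit2 (hH : H.IsHermitian) :
    star (hH.eigenvectorUnitary : Matrix (Fin d) (Fin d) ℂ) * (hH.eigenvectorUnitary : Matrix (Fin d) (Fin d) ℂ) = 1 :=
  Matrix.mem_unitaryGroup_iff'.mp hH.eigenvectorUnitary.2

lemma star_mul_A (hA : A.IsHermitian) :
    star (hA.eigenvectorUnitary : Matrix (Fin d) (Fin d) ℂ) * A =
      Matrix.diagonal (fun i => (hA.eigenvalues i : ℂ)) *
        star (hA.eigenvectorUnitary : Matrix (Fin d) (Fin d) ℂ) := by
  have h : star (hA.eigenvectorUnitary : Matrix (Fin d) (Fin d) ℂ) *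
      ((hA.eigenvectorUnitary : Matrix (Fin d) (Fin d) ℂ) *
        Matrix.diagonal (RCLike.ofReal ∘ hA.eigenvalues) *
        star (hA.eigenvectorUnitary : Matrix (Fin d) (Fin d) ℂ)) =
      Matrix.diagonal (fun i => (hA.eigenvalues i : ℂ)) *
        star (hA.eigenvectorUnitary : Matrix (Fin d) (Fin d) ℂ) := by
    rw [← Matrix.mul_assoc, ← Matrix.mul_assoc, unit2 hA, Matrix.one_mul]
    rfl
  rw [← Unitary.conjStarAlgAut_apply (S := ℂ) hA.eigenvectorUnitary, ← hA.spectral_theorem] at h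
  exact h

lemma B_mul_U (hB : B.IsHermitian) :
    B * (hB.eigenvectorUnitary : Matrix (Fin d) (Fin d) ℂ) =
      (hB.eigenvectorUnitary : Matrix (Fin d) (Fin d) ℂ) *
        Matrix.diagonal (fun j => (hB.eigenvalues j : ℂ)) := by
  have h : (hB.eigenvectorUnitary : Matrix (Fin d) (Fin d) ℂ) *
        Matrix.diagonal (RCLike.ofReal ∘ hB.eigenvalues) *
        star (hB.eigenvectorUnitary : Matrix (Fin d) (Fin d) ℂ) *
        (hB.eigenvectorUnitary : Matrix (Fin d) (Fin d) ℂ) =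
      (hB.eigenvectorUnitary : Matrix (Fin d) (Fin d) ℂ) *
        Matrix.diagonal (fun j => (hB.eigenvalues j : ℂ)) := by
    rw [Matrix.mul_assoc, unit2 hB, Matrix.mul_one]
    rfl
  rw [← Unitary.conjStarAlgAut_apply (S := ℂ) hB.eigenvectorUnitary, ← hB.spectral_theorem] at h
  exact h

lemma K_eq (hA : A.IsHermitian) (hB : B.IsHermitian) :
    star (hA.eigenvectorUnitary : Matrix (Fin d) (Fin d) ℂ) * (A - B) *
        (hB.eigenvectorUnitary : Matrix (Fin d) (Fin d) ℂ) =
      Matrix.diagonal (fun i => (hA.eigenvalues i : ℂ)) *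
          (star (hA.eigenvectorUnitary : Matrix (Fin d) (Fin d) ℂ) *
            (hB.eigenvectorUnitary : Matrix (Fin d) (Fin d) ℂ)) -
        (star (hA.eigenvectorUnitary : Matrix (Fin d) (Fin d) ℂ) *
            (hB.eigenvectorUnitary : Matrix (Fin d) (Fin d) ℂ)) *
          Matrix.diagonal (fun j => (hB.eigenvalues j : ℂ)) := by
  rw [Matrix.mul_sub, Matrix.sub_mul, star_mul_A hA, Matrix.mul_assoc (Matrix.diagonal _),
    Matrix.mul_assoc (star (hA.eigenvectorUnitary : Matrix (Fin d) (Fin d) ℂ)) B,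
    B_mul_U hB]
  simp only [Matrix.mul_assoc]

lemma K_apply (hA : A.IsHermitian) (hB : B.IsHermitian) (i j : Fin d) :
    (star (hA.eigenvectorUnitary : Matrix (Fin d) (Fin d) ℂ) * (A - B) *
        (hB.eigenvectorUnitary : Matrix (Fin d) (Fin d) ℂ)) i j =
      ((hA.eigenvalues i - hB.eigenvalues j : ℝ) : ℂ) *
        ((star (hA.eigenvectorUnitary : Matrix (Fin d) (Fin d) ℂ) *
          (hB.eigenvectorUnitary : Matrix (Fin d) (Fin d) ℂ)) i j) := by
  rw [K_eq hA hB]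
  simp only [Matrix.sub_apply, Matrix.diagonal_mul, Matrix.mul_diagonal]
  push_cast
  ring

lemma trace_mexp (θ : ℝ) (hH : H.IsHermitian) :
    (mexp θ hH).trace = ((∑ i, Real.exp (θ * hH.eigenvalues i) : ℝ) : ℂ) := by
  rw [mexp, Matrix.trace_mul_cycle, Matrix.mul_assoc, ← Matrix.mul_assoc, unit2, Matrix.one_mul]
  push_cast
  simp [Matrix.trace_diagonal]

lemma trace_diag_mul_mul (g : Fin d → ℂ) (K L : Matrix (Fin d) (Fin d) ℂ) :
    (Matrix.diagonal g * K * L).trace = ∑ i, ∑ j, g i * (K i j * L j i) := by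
  simp [Matrix.trace, Matrix.diag, Matrix.mul_apply, Matrix.diagonal, Finset.mul_sum, mul_assoc]

lemma trace_mexp_mul_self (θ : ℝ) (hH : H.IsHermitian) :
    (mexp θ hH * H).trace
      = ((∑ i, hH.eigenvalues i * Real.exp (θ * hH.eigenvalues i) : ℝ) : ℂ) := by
  have hspec : mexp θ hH * H = mexp θ hH *
      ((hH.eigenvectorUnitary : Matrix (Fin d) (Fin d) ℂ) *
        Matrix.diagonal (RCLike.ofReal ∘ hH.eigenvalues) *
        star (hH.eigenvectorUnitary : Matrix (Fin d) (Fin d) ℂ)) := by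
    rw [← Unitary.conjStarAlgAut_apply (S := ℂ) hH.eigenvectorUnitary, ← hH.spectral_theorem]
  rw [hspec, mexp]
  have : (hH.eigenvectorUnitary : Matrix (Fin d) (Fin d) ℂ) *
      Matrix.diagonal (fun i => (Real.exp (θ * hH.eigenvalues i) : ℂ)) *
      star (hH.eigenvectorUnitary : Matrix (Fin d) (Fin d) ℂ) *
      ((hH.eigenvectorUnitary : Matrix (Fin d) (Fin d) ℂ) *
        Matrix.diagonal (RCLike.ofReal ∘ hH.eigenvalues) *
        star (hH.eigenvectorUnitary : Matrix (Fin d) (Fin d) ℂ))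
      = (hH.eigenvectorUnitary : Matrix (Fin d) (Fin d) ℂ) *
        (Matrix.diagonal (fun i => (Real.exp (θ * hH.eigenvalues i) : ℂ)) *
          Matrix.diagonal (RCLike.ofReal ∘ hH.eigenvalues)) *
        star (hH.eigenvectorUnitary : Matrix (Fin d) (Fin d) ℂ) := by
    simp only [Matrix.mul_assoc]
    rw [← Matrix.mul_assoc (star (hH.eigenvectorUnitary : Matrix (Fin d) (Fin d) ℂ)),
      unit2, Matrix.one_mul]
  rw [this, Matrix.trace_mul_cycle, Matrix.mul_assoc, ← Matrix.mul_assoc, unit2,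
    Matrix.one_mul, Matrix.diagonal_mul_diagonal, Matrix.trace_diagonal]
  push_cast
  congr 1
  ext i
  simp [Function.comp]
  ring

lemma trace_diag_mul (g : Fin d → ℂ) (N : Matrix (Fin d) (Fin d) ℂ) :
    (Matrix.diagonal g * N).trace = ∑ i, g i * N i i := by
  simp [Matrix.trace, Matrix.diag, Matrix.mul_apply, Matrix.diagonal]

lemma mul_insert (hH : H.IsHermitian) (P Q : Matrix (Fin d) (Fin d) ℂ) :
    P * Q = (P * (hH.eigenvectorUnitary : Matrix (Fin d) (Fin d) ℂ)) *
      (star (hH.eigenvectorUnitary : Matrix (Fin d) (Fin d) ℂ) * Q) := by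
  rw [Matrix.mul_assoc, ← Matrix.mul_assoc (hH.eigenvectorUnitary : Matrix (Fin d) (Fin d) ℂ),
    unit1, Matrix.one_mul]

lemma trace_mexp_mul (θ : ℝ) (hH : H.IsHermitian) (N : Matrix (Fin d) (Fin d) ℂ) :
    (mexp θ hH * N).trace = ∑ i, (Real.exp (θ * hH.eigenvalues i) : ℂ) *
      ((star (hH.eigenvectorUnitary : Matrix (Fin d) (Fin d) ℂ) * N *
        (hH.eigenvectorUnitary : Matrix (Fin d) (Fin d) ℂ)) i i) := by
  have h1 : mexp θ hH * N = (hH.eigenvectorUnitary : Matrix (Fin d) (Fin d) ℂ) *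
      ((Matrix.diagonal (fun i => (Real.exp (θ * hH.eigenvalues i) : ℂ))) *
        (star (hH.eigenvectorUnitary : Matrix (Fin d) (Fin d) ℂ) * N)) := by
    rw [mexp]; simp only [Matrix.mul_assoc]
  rw [h1, Matrix.trace_mul_comm, Matrix.mul_assoc, trace_diag_mul]

lemma star_sub_herm (hA : A.IsHermitian) (hB : B.IsHermitian) : star (A - B) = A - B := by
  rw [Matrix.star_eq_conjTranspose]; exact hA.sub hB

lemma trace_mexp_mul_sub (hA : A.IsHermitian) (hB : B.IsHermitian) (θ : ℝ) :
    (mexp θ hA * (A - B)).trace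
      = ((∑ i, ∑ j, Real.exp (θ * hA.eigenvalues i) * ((hA.eigenvalues i - hB.eigenvalues j) *
          Complex.normSq ((star (hA.eigenvectorUnitary : Matrix (Fin d) (Fin d) ℂ) *
            (hB.eigenvectorUnitary : Matrix (Fin d) (Fin d) ℂ)) i j)) : ℝ) : ℂ) := by
  rw [trace_mexp_mul θ hA (A - B)]
  have h2 : star (hA.eigenvectorUnitary : Matrix (Fin d) (Fin d) ℂ) * (A - B) *
      (hA.eigenvectorUnitary : Matrix (Fin d) (Fin d) ℂ)
      = (star (hA.eigenvectorUnitary : Matrix (Fin d) (Fin d) ℂ) * (A - B) *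
          (hB.eigenvectorUnitary : Matrix (Fin d) (Fin d) ℂ)) *
        star (star (hA.eigenvectorUnitary : Matrix (Fin d) (Fin d) ℂ) *
          (hB.eigenvectorUnitary : Matrix (Fin d) (Fin d) ℂ)) := by
    rw [mul_insert hB (star (hA.eigenvectorUnitary : Matrix (Fin d) (Fin d) ℂ) * (A - B))
      (hA.eigenvectorUnitary : Matrix (Fin d) (Fin d) ℂ), StarMul.star_mul, star_star]
  rw [h2]
  push_cast
  refine Finset.sum_congr rfl fun i _ => ?_
  rw [Matrix.mul_apply, Finset.mul_sum]
  refine Finset.sum_congr rfl fun j _ => ?_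
  rw [K_apply hA hB, Matrix.star_apply, mul_assoc, Complex.star_def, Complex.mul_conj]
  push_cast
  ring

lemma trace_mexp_mul_sq (hA : A.IsHermitian) (hB : B.IsHermitian) (θ : ℝ) :
    (mexp θ hA * ((A - B) * (A - B))).trace
      = ((∑ i, ∑ j, Real.exp (θ * hA.eigenvalues i) * ((hA.eigenvalues i - hB.eigenvalues j) ^ 2 *
          Complex.normSq ((star (hA.eigenvectorUnitary : Matrix (Fin d) (Fin d) ℂ) *
            (hB.eigenvectorUnitary : Matrix (Fin d) (Fin d) ℂ)) i j)) : ℝ) : ℂ) := by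
  rw [trace_mexp_mul θ hA ((A - B) * (A - B))]
  have h2 : star (hA.eigenvectorUnitary : Matrix (Fin d) (Fin d) ℂ) * ((A - B) * (A - B)) *
      (hA.eigenvectorUnitary : Matrix (Fin d) (Fin d) ℂ)
      = (star (hA.eigenvectorUnitary : Matrix (Fin d) (Fin d) ℂ) * (A - B) *
          (hB.eigenvectorUnitary : Matrix (Fin d) (Fin d) ℂ)) *
        star (star (hA.eigenvectorUnitary : Matrix (Fin d) (Fin d) ℂ) * (A - B) *
          (hB.eigenvectorUnitary : Matrix (Fin d) (Fin d) ℂ)) := by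
    have h3 : star (hA.eigenvectorUnitary : Matrix (Fin d) (Fin d) ℂ) * ((A - B) * (A - B)) *
        (hA.eigenvectorUnitary : Matrix (Fin d) (Fin d) ℂ)
        = (star (hA.eigenvectorUnitary : Matrix (Fin d) (Fin d) ℂ) * (A - B)) *
          ((A - B) * (hA.eigenvectorUnitary : Matrix (Fin d) (Fin d) ℂ)) := by
      simp only [Matrix.mul_assoc]
    rw [h3, mul_insert hB (star (hA.eigenvectorUnitary : Matrix (Fin d) (Fin d) ℂ) * (A - B))
      ((A - B) * (hA.eigenvectorUnitary : Matrix (Fin d) (Fin d) ℂ))]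
    congr 1
    rw [StarMul.star_mul, StarMul.star_mul, star_star, star_sub_herm hA hB]
  rw [h2]
  push_cast
  refine Finset.sum_congr rfl fun i _ => ?_
  rw [Matrix.mul_apply, Finset.mul_sum]
  refine Finset.sum_congr rfl fun j _ => ?_
  rw [Matrix.star_apply, K_apply hA hB, ← Complex.mul_conj]
  simp only [Complex.star_def, map_sub, _root_.map_mul, Complex.conj_ofReal]
  push_cast
  ring

lemma starC_eq (hA : A.IsHermitian) (hB : B.IsHermitian) (i j : Fin d) :
    Complex.normSq ((star (hB.eigenvectorUnitary : Matrix (Fin d) (Fin d) ℂ) *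
        (hA.eigenvectorUnitary : Matrix (Fin d) (Fin d) ℂ)) j i)
      = Complex.normSq ((star (hA.eigenvectorUnitary : Matrix (Fin d) (Fin d) ℂ) *
        (hB.eigenvectorUnitary : Matrix (Fin d) (Fin d) ℂ)) i j) := by
  have hCs : star (hB.eigenvectorUnitary : Matrix (Fin d) (Fin d) ℂ) *
      (hA.eigenvectorUnitary : Matrix (Fin d) (Fin d) ℂ)
      = star (star (hA.eigenvectorUnitary : Matrix (Fin d) (Fin d) ℂ) *
        (hB.eigenvectorUnitary : Matrix (Fin d) (Fin d) ℂ)) := by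
    rw [StarMul.star_mul, star_star]
  rw [hCs, Matrix.star_apply, Complex.star_def, Complex.normSq_conj]

lemma trace_mexp_mul_sub' (hA : A.IsHermitian) (hB : B.IsHermitian) (θ : ℝ) :
    (mexp θ hB * (A - B)).trace
      = ((∑ i, ∑ j, Real.exp (θ * hB.eigenvalues j) * ((hA.eigenvalues i - hB.eigenvalues j) *
          Complex.normSq ((star (hA.eigenvectorUnitary : Matrix (Fin d) (Fin d) ℂ) *
            (hB.eigenvectorUnitary : Matrix (Fin d) (Fin d) ℂ)) i j)) : ℝ) : ℂ) := by
  have h := trace_mexp_mul_sub hB hA θ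
  have e1 : mexp θ hB * (A - B) = -(mexp θ hB * (B - A)) := by
    rw [← Matrix.mul_neg, neg_sub]
  rw [e1, Matrix.trace_neg, h, ← Complex.ofReal_neg]
  refine congrArg Complex.ofReal ?_
  rw [Finset.sum_comm, ← Finset.sum_neg_distrib]
  refine Finset.sum_congr rfl fun i _ => ?_
  rw [← Finset.sum_neg_distrib]
  refine Finset.sum_congr rfl fun j _ => ?_
  rw [starC_eq hA hB]
  ring

lemma trace_mexp_mul_sq' (hA : A.IsHermitian) (hB : B.IsHermitian) (θ : ℝ) :
    (mexp θ hB * ((A - B) * (A - B))).trace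
      = ((∑ i, ∑ j, Real.exp (θ * hB.eigenvalues j) * ((hA.eigenvalues i - hB.eigenvalues j) ^ 2 *
          Complex.normSq ((star (hA.eigenvectorUnitary : Matrix (Fin d) (Fin d) ℂ) *
            (hB.eigenvectorUnitary : Matrix (Fin d) (Fin d) ℂ)) i j)) : ℝ) : ℂ) := by
  have h := trace_mexp_mul_sq hB hA θ
  have e1 : (A - B) * (A - B) = (B - A) * (B - A) := by
    rw [← neg_sub B A, Matrix.neg_mul, Matrix.mul_neg, neg_neg]
  rw [e1, h]
  refine congrArg Complex.ofReal ?_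
  rw [Finset.sum_comm]
  refine Finset.sum_congr rfl fun i _ => Finset.sum_congr rfl fun j _ => ?_
  rw [starC_eq hA hB]
  ring

lemma aux_exp {s : ℝ} (hs : 0 ≤ s) : Real.exp s - 1 ≤ s * (Real.exp s + 1) / 2 := by
  have key : ∀ x : ℝ, 0 ≤ 1 - Real.exp x + x * Real.exp x := by
    intro x
    have h1 : 1 - x ≤ Real.exp (-x) := by linarith [Real.add_one_le_exp (-x)]
    have h2 : Real.exp x * Real.exp (-x) = 1 := by rw [← Real.exp_add]; simp
    nlinarith [Real.exp_pos x, mul_le_mul_of_nonneg_left h1 (Real.exp_pos x).le]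
  set g : ℝ → ℝ := fun s => s * (Real.exp s + 1) / 2 - (Real.exp s - 1) with hgdef
  have hderiv : ∀ x : ℝ, HasDerivAt g
      ((1 * (Real.exp x + 1) + x * Real.exp x) / 2 - Real.exp x) x := by
    intro x
    exact (((hasDerivAt_id x).mul ((Real.hasDerivAt_exp x).add_const 1)).div_const 2).sub
      ((Real.hasDerivAt_exp x).sub_const 1)
  have hcont : Continuous g :=
    ((continuous_id.mul (Real.continuous_exp.add continuous_const)).div_const 2).sub
      (Real.continuous_exp.sub continuous_const)
  have hmono : MonotoneOn g (Set.Ici (0:ℝ)) := by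
    apply monotoneOn_of_deriv_nonneg (convex_Ici 0) hcont.continuousOn
      (fun x _ => (hderiv x).differentiableAt.differentiableWithinAt)
    intro x hx
    rw [(hderiv x).deriv]
    have := key x
    rw [interior_Ici] at hx
    have hx0 : 0 < x := hx
    nlinarith
  have h0 : g 0 ≤ g s := hmono (Set.mem_Ici.mpr le_rfl) (Set.mem_Ici.mpr hs) hs
  have hg0 : g 0 = 0 := by simp [hgdef]
  have hgs : g s = s * (Real.exp s + 1) / 2 - (Real.exp s - 1) := rfl
  rw [hg0, hgs] at h0
  linarith

lemma exp_mean (u v : ℝ) :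
    (Real.exp u - Real.exp v) * (u - v) ≤ (u - v)^2 * (Real.exp u + Real.exp v) / 2 := by
  rcases le_total v u with h | h
  · have hs0 : 0 ≤ u - v := by linarith
    have h1 := aux_exp hs0
    have h2 : Real.exp u = Real.exp v * Real.exp (u - v) := by
      rw [← Real.exp_add]; congr 1; ring
    nlinarith [Real.exp_pos v, mul_le_mul_of_nonneg_left h1 (Real.exp_pos v).le,
      mul_le_mul_of_nonneg_right (mul_le_mul_of_nonneg_left h1 (Real.exp_pos v).le) hs0]
  · have hs0 : 0 ≤ v - u := by linarith
    have h1 := aux_exp hs0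
    have h2 : Real.exp v = Real.exp u * Real.exp (v - u) := by
      rw [← Real.exp_add]; congr 1; ring
    nlinarith [Real.exp_pos u, mul_le_mul_of_nonneg_left h1 (Real.exp_pos u).le,
      mul_le_mul_of_nonneg_right (mul_le_mul_of_nonneg_left h1 (Real.exp_pos u).le) hs0]

lemma mvti (hA : A.IsHermitian) (hB : B.IsHermitian) (θ : ℝ) :
    θ * ((mexp θ hA * (A - B)).trace - (mexp θ hB * (A - B)).trace).re
      ≤ θ^2 / 2 * ((mexp θ hA * ((A - B) * (A - B))).trace
          + (mexp θ hB * ((A - B) * (A - B))).trace).re := by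
  rw [trace_mexp_mul_sub hA hB θ, trace_mexp_mul_sub' hA hB θ, trace_mexp_mul_sq hA hB θ,
    trace_mexp_mul_sq' hA hB θ, ← Complex.ofReal_sub, ← Complex.ofReal_add,
    Complex.ofReal_re, Complex.ofReal_re]
  simp only [← Finset.sum_sub_distrib, ← Finset.sum_add_distrib, Finset.mul_sum]
  refine Finset.sum_le_sum fun i _ => Finset.sum_le_sum fun j _ => ?_
  have hw := Complex.normSq_nonneg ((star (hA.eigenvectorUnitary : Matrix (Fin d) (Fin d) ℂ) *
    (hB.eigenvectorUnitary : Matrix (Fin d) (Fin d) ℂ)) i j)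
  have hkey := mul_le_mul_of_nonneg_right
    (exp_mean (θ * hA.eigenvalues i) (θ * hB.eigenvalues j)) hw
  nlinarith [hkey]

lemma mulVec_normSq_le {M : Matrix (Fin d) (Fin d) ℂ} {b : ℝ}
    (hMb : ‖Matrix.toEuclideanCLM (𝕜 := ℂ) M‖ ≤ b) (x : Fin d → ℂ) :
    ∑ k, Complex.normSq ((M *ᵥ x) k) ≤ b ^ 2 * ∑ k, Complex.normSq (x k) := by
  have h1 : ‖Matrix.toEuclideanCLM (𝕜 := ℂ) M ((WithLp.equiv 2 _).symm x)‖
      ≤ b * ‖(WithLp.equiv 2 (Fin d → ℂ)).symm x‖ :=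
    le_trans (ContinuousLinearMap.le_opNorm _ _)
      (mul_le_mul_of_nonneg_right hMb (norm_nonneg _))
  change ‖(WithLp.equiv 2 (Fin d → ℂ)).symm (M *ᵥ x)‖ ≤ b * ‖(WithLp.equiv 2 (Fin d → ℂ)).symm x‖ at h1
  have hnorm : ∀ y : Fin d → ℂ,
      ‖(WithLp.equiv 2 (Fin d → ℂ)).symm y‖ = Real.sqrt (∑ k, Complex.normSq (y k)) := by
    intro y
    rw [EuclideanSpace.norm_eq]
    congr 1
    refine Finset.sum_congr rfl fun k _ => ?_
    rw [← Complex.sq_norm]; rfl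
  rw [hnorm, hnorm] at h1
  have hb0 : 0 ≤ b := le_trans (norm_nonneg _) hMb
  have h2 := pow_le_pow_left₀ (Real.sqrt_nonneg _) h1 2
  rw [mul_pow, Real.sq_sqrt (Finset.sum_nonneg fun k _ => Complex.normSq_nonneg _),
    Real.sq_sqrt (Finset.sum_nonneg fun k _ => Complex.normSq_nonneg _)] at h2
  exact h2

lemma col_normSq_one (hH : H.IsHermitian) (i : Fin d) :
    ∑ k, Complex.normSq ((hH.eigenvectorUnitary : Matrix (Fin d) (Fin d) ℂ) k i) = 1 := by
  have h := unit2 hH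
  have h2 : (star (hH.eigenvectorUnitary : Matrix (Fin d) (Fin d) ℂ) *
      (hH.eigenvectorUnitary : Matrix (Fin d) (Fin d) ℂ)) i i = 1 := by
    rw [h, Matrix.one_apply_eq]
  rw [Matrix.mul_apply] at h2
  have h3 : ∀ k, (star (hH.eigenvectorUnitary : Matrix (Fin d) (Fin d) ℂ)) i k *
      (hH.eigenvectorUnitary : Matrix (Fin d) (Fin d) ℂ) k i
      = ((Complex.normSq ((hH.eigenvectorUnitary : Matrix (Fin d) (Fin d) ℂ) k i) : ℝ) : ℂ) := by
    intro k
    rw [Matrix.star_apply, Complex.star_def, mul_comm, Complex.mul_conj]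
  rw [Finset.sum_congr rfl fun k _ => h3 k, ← Complex.ofReal_sum] at h2
  exact_mod_cast h2

lemma trace_mexp_mul_sq_le (θ : ℝ) (hH : H.IsHermitian) {M : Matrix (Fin d) (Fin d) ℂ}
    (hM : M.IsHermitian) {b : ℝ} (hMb : ‖Matrix.toEuclideanCLM (𝕜 := ℂ) M‖ ≤ b) :
    (mexp θ hH * (M * M)).trace.re ≤ b ^ 2 * ∑ i, Real.exp (θ * hH.eigenvalues i) := by
  have hM' : star M = M := by rw [Matrix.star_eq_conjTranspose]; exact hM
  rw [trace_mexp_mul θ hH (M * M)]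
  have h2 : star (hH.eigenvectorUnitary : Matrix (Fin d) (Fin d) ℂ) * (M * M) *
      (hH.eigenvectorUnitary : Matrix (Fin d) (Fin d) ℂ)
      = star (M * (hH.eigenvectorUnitary : Matrix (Fin d) (Fin d) ℂ)) *
        (M * (hH.eigenvectorUnitary : Matrix (Fin d) (Fin d) ℂ)) := by
    rw [StarMul.star_mul, hM']
    simp only [Matrix.mul_assoc]
  rw [h2]
  have h3 : ∀ i, (star (M * (hH.eigenvectorUnitary : Matrix (Fin d) (Fin d) ℂ)) *
      (M * (hH.eigenvectorUnitary : Matrix (Fin d) (Fin d) ℂ))) i i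
      = ((∑ k, Complex.normSq ((M * (hH.eigenvectorUnitary : Matrix (Fin d) (Fin d) ℂ)) k i) : ℝ) : ℂ) := by
    intro i
    rw [Matrix.mul_apply, Complex.ofReal_sum]
    refine Finset.sum_congr rfl fun k _ => ?_
    rw [Matrix.star_apply, Complex.star_def, mul_comm, Complex.mul_conj]
  rw [Finset.sum_congr rfl fun i _ => congrArg _ (h3 i)]
  have h4 : ∀ i : Fin d, ∑ k, Complex.normSq
      ((M * (hH.eigenvectorUnitary : Matrix (Fin d) (Fin d) ℂ)) k i) ≤ b ^ 2 := by
    intro i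
    have hcol : ∀ k, (M * (hH.eigenvectorUnitary : Matrix (Fin d) (Fin d) ℂ)) k i
        = (M *ᵥ (fun k' => (hH.eigenvectorUnitary : Matrix (Fin d) (Fin d) ℂ) k' i)) k := by
      intro k
      rw [Matrix.mul_apply, Matrix.mulVec]
      rfl
    rw [Finset.sum_congr rfl fun k _ => congrArg _ (hcol k)]
    calc ∑ k, Complex.normSq ((M *ᵥ (fun k' => (hH.eigenvectorUnitary : Matrix (Fin d) (Fin d) ℂ) k' i)) k)
        ≤ b ^ 2 * ∑ k, Complex.normSq ((hH.eigenvectorUnitary : Matrix (Fin d) (Fin d) ℂ) k i) :=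
          mulVec_normSq_le hMb _
      _ = b ^ 2 := by rw [col_normSq_one hH i, mul_one]
  have h5 : (∑ i, ((Real.exp (θ * hH.eigenvalues i) : ℂ) *
      ((∑ k, Complex.normSq ((M * (hH.eigenvectorUnitary : Matrix (Fin d) (Fin d) ℂ)) k i) : ℝ) : ℂ))).re
      = ∑ i, Real.exp (θ * hH.eigenvalues i) *
        (∑ k, Complex.normSq ((M * (hH.eigenvectorUnitary : Matrix (Fin d) (Fin d) ℂ)) k i)) := by
    rw [Complex.re_sum]
    refine Finset.sum_congr rfl fun i _ => ?_
    rw [← Complex.ofReal_mul, Complex.ofReal_re]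
  rw [h5, Finset.mul_sum]
  refine Finset.sum_le_sum fun i _ => ?_
  rw [mul_comm (b^2) _]
  exact mul_le_mul_of_nonneg_left (h4 i) (Real.exp_nonneg _)

section Comb

variable {n m : ℕ} {A : Fin n → Matrix (Fin d) (Fin d) ℂ}

def pairSet (n m : ℕ) : Finset (Fin n × Fin n) :=
  univ.filter (fun p => (p.1 : ℕ) < m ∧ m ≤ (p.2 : ℕ))

lemma card_filter_lt (hm : m ≤ n) :
    (univ.filter fun i : Fin n => (i : ℕ) < m).card = m := by
  rw [← Fintype.card_subtype]
  have e : {i : Fin n // (i : ℕ) < m} ≃ Fin m :=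
    { toFun := fun x => ⟨(x.1 : ℕ), x.2⟩
      invFun := fun j => ⟨⟨(j : ℕ), lt_of_lt_of_le j.2 hm⟩, j.2⟩
      left_inv := fun x => by ext; rfl
      right_inv := fun j => by ext; rfl }
  rw [Fintype.card_congr e, Fintype.card_fin]

lemma card_filter_ge (hm : m ≤ n) :
    (univ.filter fun j : Fin n => m ≤ (j : ℕ)).card = n - m := by
  have h : (univ.filter fun j : Fin n => m ≤ (j : ℕ))
      = (univ.filter fun i : Fin n => (i : ℕ) < m)ᶜ := by
    ext j; simp [not_lt]
  rw [h, Finset.card_compl, card_filter_lt hm, Fintype.card_fin]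

lemma pairSet_eq : pairSet n m
    = (univ.filter fun i : Fin n => (i : ℕ) < m) ×ˢ (univ.filter fun j : Fin n => m ≤ (j : ℕ)) := by
  ext p
  simp [pairSet, Finset.mem_product]

lemma card_pairSet (hm : m ≤ n) : (pairSet n m).card = m * (n - m) := by
  rw [pairSet_eq, Finset.card_product, card_filter_lt hm, card_filter_ge hm]

lemma subsampleSum_eq (σ : Equiv.Perm (Fin n)) :
    subsampleSum m A σ = ∑ i ∈ univ.filter (fun i : Fin n => (i : ℕ) < m), A (σ i) := by
  rw [subsampleSum, Finset.sum_filter]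

lemma swap_diff (σ : Equiv.Perm (Fin n)) {p : Fin n × Fin n} (hp : p ∈ pairSet n m) :
    subsampleSum m A (σ * Equiv.swap p.1 p.2)
      = subsampleSum m A σ - A (σ p.1) + A (σ p.2) := by
  obtain ⟨hp1, hp2⟩ : (p.1 : ℕ) < m ∧ m ≤ (p.2 : ℕ) := by
    simpa [pairSet] using hp
  have hmem : p.1 ∈ univ.filter (fun i : Fin n => (i : ℕ) < m) := by simp [hp1]
  rw [subsampleSum_eq, subsampleSum_eq,
    ← Finset.sum_erase_add _ _ hmem, ← Finset.sum_erase_add _ _ hmem]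
  have h1 : ∀ i ∈ (univ.filter (fun i : Fin n => (i : ℕ) < m)).erase p.1,
      A ((σ * Equiv.swap p.1 p.2) i) = A (σ i) := by
    intro i hi
    have hi1 : i ≠ p.1 := Finset.ne_of_mem_erase hi
    have hi2 : i ≠ p.2 := by
      intro h
      have hlt : (i : ℕ) < m := by simpa using (Finset.mem_of_mem_erase hi)
      rw [h] at hlt
      omega
    rw [Equiv.Perm.mul_apply, Equiv.swap_apply_of_ne_of_ne hi1 hi2]
  rw [Finset.sum_congr rfl h1]
  have h2 : (σ * Equiv.swap p.1 p.2) p.1 = σ p.2 := by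
    rw [Equiv.Perm.mul_apply, Equiv.swap_apply_left]
  rw [h2]
  abel

end Comb

section Comb2
variable {n m : ℕ} {A : Fin n → Matrix (Fin d) (Fin d) ℂ}

lemma sum_swap_diff (hm : m ≤ n) (hsum : ∑ i, A i = 0) (σ : Equiv.Perm (Fin n)) :
    ∑ p ∈ pairSet n m, (subsampleSum m A σ - subsampleSum m A (σ * Equiv.swap p.1 p.2))
      = (n : ℕ) • subsampleSum m A σ := by
  have h1 : ∀ p ∈ pairSet n m,
      subsampleSum m A σ - subsampleSum m A (σ * Equiv.swap p.1 p.2)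
        = A (σ p.1) - A (σ p.2) := by
    intro p hp; rw [swap_diff σ hp]; abel
  have hS2 : ∑ j ∈ univ.filter (fun j : Fin n => m ≤ (j : ℕ)), A (σ j)
      = - subsampleSum m A σ := by
    have htot : ∑ j : Fin n, A (σ j) = 0 := by
      rw [Equiv.sum_comp σ A, hsum]
    have hsplit := Finset.sum_filter_add_sum_filter_not univ
      (fun i : Fin n => (i : ℕ) < m) (fun i => A (σ i))
    have hneg : univ.filter (fun i : Fin n => ¬ (i : ℕ) < m)
        = univ.filter (fun j : Fin n => m ≤ (j : ℕ)) := by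
      ext j; simp [not_lt]
    rw [hneg, htot, ← subsampleSum_eq] at hsplit
    linear_combination (norm := abel) hsplit
  rw [Finset.sum_congr rfl h1, pairSet_eq, Finset.sum_product]
  have h2 : ∀ i ∈ univ.filter (fun i : Fin n => (i : ℕ) < m),
      ∑ j ∈ univ.filter (fun j : Fin n => m ≤ (j : ℕ)), (A (σ i) - A (σ j))
        = (n - m) • A (σ i) + subsampleSum m A σ := by
    intro i _
    rw [Finset.sum_sub_distrib, Finset.sum_const, card_filter_ge hm, hS2]
    abel
  rw [Finset.sum_congr rfl h2, Finset.sum_add_distrib, Finset.sum_const, card_filter_lt hm,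
    ← Finset.smul_sum, ← subsampleSum_eq, ← add_nsmul]
  congr 1
  omega

end Comb2

noncomputable def Ffun {n d m : ℕ} (A : Fin n → Matrix (Fin d) (Fin d) ℂ)
    (hX : ∀ σ : Equiv.Perm (Fin n), (subsampleSum m A σ).IsHermitian) (θ : ℝ) : ℝ :=
  ∑ σ : Equiv.Perm (Fin n), ∑ i, Real.exp (θ * (hX σ).eigenvalues i)

noncomputable def Gfun {n d m : ℕ} (A : Fin n → Matrix (Fin d) (Fin d) ℂ)
    (hX : ∀ σ : Equiv.Perm (Fin n), (subsampleSum m A σ).IsHermitian) (θ : ℝ) : ℝ :=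
  ∑ σ : Equiv.Perm (Fin n), ∑ i, (hX σ).eigenvalues i * Real.exp (θ * (hX σ).eigenvalues i)

lemma Ffun_nonneg {n d m : ℕ} (A : Fin n → Matrix (Fin d) (Fin d) ℂ)
    (hX : ∀ σ : Equiv.Perm (Fin n), (subsampleSum m A σ).IsHermitian) (θ : ℝ) :
    0 ≤ Ffun A hX θ :=
  Finset.sum_nonneg fun σ _ => Finset.sum_nonneg fun i _ => (Real.exp_pos _).le

lemma Ffun_hasDeriv {n d m : ℕ} (A : Fin n → Matrix (Fin d) (Fin d) ℂ)
    (hX : ∀ σ : Equiv.Perm (Fin n), (subsampleSum m A σ).IsHermitian) (θ : ℝ) :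
    HasDerivAt (Ffun A hX) (Gfun A hX θ) θ := by
  apply HasDerivAt.fun_sum
  intro σ _
  apply HasDerivAt.fun_sum
  intro i _
  have h := (hasDerivAt_mul_const ((hX σ).eigenvalues i)).exp (x := θ)
  exact h.congr_deriv (by ring)

lemma reindex_swap {n : ℕ} (g : Equiv.Perm (Fin n) → ℝ) (p : Fin n × Fin n) :
    ∑ σ : Equiv.Perm (Fin n), g (σ * Equiv.swap p.1 p.2) = ∑ σ : Equiv.Perm (Fin n), g σ :=
  Fintype.sum_equiv (Equiv.mulRight (Equiv.swap p.1 p.2)) _ _ (fun σ => rfl)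

lemma swap_swap_cancel {n : ℕ} (σ : Equiv.Perm (Fin n)) (p : Fin n × Fin n) :
    (σ * Equiv.swap p.1 p.2) * Equiv.swap p.1 p.2 = σ := by
  rw [mul_assoc, Equiv.swap_mul_self, mul_one]

set_option maxHeartbeats 1000000 in
lemma key_ineq {n d m : ℕ} (hn : 2 ≤ n) (hm : m ≤ n)
    (A : Fin n → Matrix (Fin d) (Fin d) ℂ) (hherm : ∀ i, (A i).IsHermitian)
    (hsum : ∑ i, A i = 0) (b : ℝ)
    (hb : ∀ i j, ‖Matrix.toEuclideanCLM (𝕜 := ℂ) (A i - A j)‖ ≤ b)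
    (hX : ∀ σ : Equiv.Perm (Fin n), (subsampleSum m A σ).IsHermitian) (θ : ℝ) :
    θ * Gfun A hX θ ≤ θ ^ 2 * (m * b ^ 2 / 2) * Ffun A hX θ := by
  classical
  set f : Equiv.Perm (Fin n) → ℝ :=
    fun σ => ∑ i, Real.exp (θ * (hX σ).eigenvalues i) with hf
  set T : ℝ := ∑ σ : Equiv.Perm (Fin n), ∑ p ∈ pairSet n m,
    ((mexp θ (hX σ) * (subsampleSum m A σ -
      subsampleSum m A (σ * Equiv.swap p.1 p.2))).trace).re with hT
  -- Step 1 : T = n * Gfun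
  have step1 : T = (n : ℝ) * Gfun A hX θ := by
    rw [hT, Gfun, Finset.mul_sum]
    refine Finset.sum_congr rfl fun σ _ => ?_
    have hmatsum : ∑ p ∈ pairSet n m, (mexp θ (hX σ) * (subsampleSum m A σ -
        subsampleSum m A (σ * Equiv.swap p.1 p.2)))
        = (n : ℂ) • (mexp θ (hX σ) * subsampleSum m A σ) := by
      rw [← Finset.mul_sum, sum_swap_diff hm hsum σ, ← Nat.cast_smul_eq_nsmul ℂ,
        Matrix.mul_smul]
    rw [← Complex.re_sum, ← Matrix.trace_sum, hmatsum, Matrix.trace_smul,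
      trace_mexp_mul_self θ (hX σ), smul_eq_mul, ← Complex.ofReal_natCast,
      ← Complex.ofReal_mul, Complex.ofReal_re]
  -- Step 2 : T' = -T
  set T' : ℝ := ∑ σ : Equiv.Perm (Fin n), ∑ p ∈ pairSet n m,
    ((mexp θ (hX (σ * Equiv.swap p.1 p.2)) * (subsampleSum m A σ -
      subsampleSum m A (σ * Equiv.swap p.1 p.2))).trace).re with hT'
  have step2 : T' = -T := by
    rw [hT', hT, Finset.sum_comm]
    have hinner : ∀ p ∈ pairSet n m, ∑ σ : Equiv.Perm (Fin n),
        ((mexp θ (hX (σ * Equiv.swap p.1 p.2)) * (subsampleSum m A σ -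
          subsampleSum m A (σ * Equiv.swap p.1 p.2))).trace).re
        = ∑ σ : Equiv.Perm (Fin n), -((mexp θ (hX σ) * (subsampleSum m A σ -
          subsampleSum m A (σ * Equiv.swap p.1 p.2))).trace).re := by
      intro p _
      rw [← reindex_swap (fun ρ => -((mexp θ (hX ρ) * (subsampleSum m A ρ -
        subsampleSum m A (ρ * Equiv.swap p.1 p.2))).trace).re) p]
      refine Finset.sum_congr rfl fun σ _ => ?_
      rw [swap_swap_cancel]
      rw [show mexp θ (hX (σ * Equiv.swap p.1 p.2)) *
          (subsampleSum m A (σ * Equiv.swap p.1 p.2) - subsampleSum m A σ)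
          = -(mexp θ (hX (σ * Equiv.swap p.1 p.2)) * (subsampleSum m A σ -
            subsampleSum m A (σ * Equiv.swap p.1 p.2))) from by
        rw [← Matrix.mul_neg, neg_sub], Matrix.trace_neg, Complex.neg_re, neg_neg]
    rw [Finset.sum_congr rfl hinner]
    simp only [Finset.sum_neg_distrib]
    rw [← Finset.sum_neg_distrib, Finset.sum_comm]
    simp only [Finset.sum_neg_distrib]
  -- Step 3 : 2 θ T ≤ θ² (stuff)
  have hmvti : ∀ σ : Equiv.Perm (Fin n), ∀ p ∈ pairSet n m,
      θ * (((mexp θ (hX σ) * (subsampleSum m A σ -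
          subsampleSum m A (σ * Equiv.swap p.1 p.2))).trace).re -
        ((mexp θ (hX (σ * Equiv.swap p.1 p.2)) * (subsampleSum m A σ -
          subsampleSum m A (σ * Equiv.swap p.1 p.2))).trace).re)
      ≤ θ ^ 2 / 2 * (((mexp θ (hX σ) * ((subsampleSum m A σ -
            subsampleSum m A (σ * Equiv.swap p.1 p.2)) * (subsampleSum m A σ -
            subsampleSum m A (σ * Equiv.swap p.1 p.2)))).trace).re +
          ((mexp θ (hX (σ * Equiv.swap p.1 p.2)) * ((subsampleSum m A σ -
            subsampleSum m A (σ * Equiv.swap p.1 p.2)) * (subsampleSum m A σ -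
            subsampleSum m A (σ * Equiv.swap p.1 p.2)))).trace).re) := by
    intro σ p _
    have h := mvti (hX σ) (hX (σ * Equiv.swap p.1 p.2)) θ
    rw [Complex.sub_re, Complex.add_re] at h
    exact h
  -- Step 4 : bound the squares
  have hsq : ∀ σ : Equiv.Perm (Fin n), ∀ p ∈ pairSet n m, ∀ ρ : Equiv.Perm (Fin n),
      ((mexp θ (hX ρ) * ((subsampleSum m A σ -
        subsampleSum m A (σ * Equiv.swap p.1 p.2)) * (subsampleSum m A σ -
        subsampleSum m A (σ * Equiv.swap p.1 p.2)))).trace).re ≤ b ^ 2 * f ρ := by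
    intro σ p hp ρ
    have hdiff : subsampleSum m A σ - subsampleSum m A (σ * Equiv.swap p.1 p.2)
        = A (σ p.1) - A (σ p.2) := by
      rw [swap_diff σ hp]; abel
    rw [hdiff]
    exact trace_mexp_mul_sq_le θ (hX ρ) ((hherm _).sub (hherm _)) (hb _ _)
  have hf_nonneg : ∀ ρ, 0 ≤ f ρ :=
    fun ρ => Finset.sum_nonneg fun i _ => (Real.exp_pos _).le
  have hFsum : ∑ σ : Equiv.Perm (Fin n), f σ = Ffun A hX θ := rfl
  -- combine
  have main : θ * (T - T') ≤ θ ^ 2 / 2 * (2 * ((m * (n - m) : ℕ) * (b ^ 2 * Ffun A hX θ))) := by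
    have lhs_eq : θ * (T - T') = ∑ σ : Equiv.Perm (Fin n), ∑ p ∈ pairSet n m,
        θ * (((mexp θ (hX σ) * (subsampleSum m A σ -
          subsampleSum m A (σ * Equiv.swap p.1 p.2))).trace).re -
        ((mexp θ (hX (σ * Equiv.swap p.1 p.2)) * (subsampleSum m A σ -
          subsampleSum m A (σ * Equiv.swap p.1 p.2))).trace).re) := by
      rw [hT, hT', ← Finset.sum_sub_distrib, Finset.mul_sum]
      refine Finset.sum_congr rfl fun σ _ => ?_
      rw [← Finset.sum_sub_distrib, Finset.mul_sum]
    have rhs1 : ∑ σ : Equiv.Perm (Fin n), ∑ p ∈ pairSet n m, (b ^ 2 * f σ)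
        = (m * (n - m) : ℕ) * (b ^ 2 * Ffun A hX θ) := by
      have hconst : ∀ σ' : Equiv.Perm (Fin n), ∑ p ∈ pairSet n m, (b ^ 2 * f σ')
          = ((m * (n - m) : ℕ) : ℝ) * (b ^ 2 * f σ') := by
        intro σ'
        rw [Finset.sum_const, card_pairSet hm, nsmul_eq_mul]
      calc ∑ σ : Equiv.Perm (Fin n), ∑ p ∈ pairSet n m, (b ^ 2 * f σ)
          = ∑ σ : Equiv.Perm (Fin n), ((m * (n - m) : ℕ) : ℝ) * (b ^ 2 * f σ) :=
            Finset.sum_congr rfl fun σ _ => hconst σ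
        _ = ((m * (n - m) : ℕ) : ℝ) * ∑ σ : Equiv.Perm (Fin n), (b ^ 2 * f σ) :=
            (Finset.mul_sum _ _ _).symm
        _ = (m * (n - m) : ℕ) * (b ^ 2 * Ffun A hX θ) := by
            rw [← Finset.mul_sum, hFsum]
    have rhs2 : ∑ σ : Equiv.Perm (Fin n), ∑ p ∈ pairSet n m, (b ^ 2 * f (σ * Equiv.swap p.1 p.2))
        = (m * (n - m) : ℕ) * (b ^ 2 * Ffun A hX θ) := by
      rw [Finset.sum_comm]
      have : ∀ p ∈ pairSet n m, ∑ σ : Equiv.Perm (Fin n), (b ^ 2 * f (σ * Equiv.swap p.1 p.2))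
          = b ^ 2 * Ffun A hX θ := by
        intro p _
        rw [reindex_swap (fun ρ => b ^ 2 * f ρ) p, ← Finset.mul_sum, hFsum]
      rw [Finset.sum_congr rfl this, Finset.sum_const, card_pairSet hm, nsmul_eq_mul]
    calc θ * (T - T')
        ≤ ∑ σ : Equiv.Perm (Fin n), ∑ p ∈ pairSet n m,
          (θ ^ 2 / 2 * (((mexp θ (hX σ) * ((subsampleSum m A σ -
            subsampleSum m A (σ * Equiv.swap p.1 p.2)) * (subsampleSum m A σ -
            subsampleSum m A (σ * Equiv.swap p.1 p.2)))).trace).re +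
          ((mexp θ (hX (σ * Equiv.swap p.1 p.2)) * ((subsampleSum m A σ -
            subsampleSum m A (σ * Equiv.swap p.1 p.2)) * (subsampleSum m A σ -
            subsampleSum m A (σ * Equiv.swap p.1 p.2)))).trace).re)) := by
          rw [lhs_eq]
          exact Finset.sum_le_sum fun σ _ => Finset.sum_le_sum fun p hp => hmvti σ p hp
      _ ≤ ∑ σ : Equiv.Perm (Fin n), ∑ p ∈ pairSet n m,
          (θ ^ 2 / 2 * (b ^ 2 * f σ + b ^ 2 * f (σ * Equiv.swap p.1 p.2))) := by
          refine Finset.sum_le_sum fun σ _ => Finset.sum_le_sum fun p hp => ?_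
          have h1 := hsq σ p hp σ
          have h2 := hsq σ p hp (σ * Equiv.swap p.1 p.2)
          have hθ : 0 ≤ θ ^ 2 / 2 := by positivity
          exact mul_le_mul_of_nonneg_left (add_le_add h1 h2) hθ
      _ = θ ^ 2 / 2 * ((∑ σ : Equiv.Perm (Fin n), ∑ p ∈ pairSet n m, (b ^ 2 * f σ))
            + (∑ σ : Equiv.Perm (Fin n), ∑ p ∈ pairSet n m,
              (b ^ 2 * f (σ * Equiv.swap p.1 p.2)))) := by
          simp only [mul_add, Finset.sum_add_distrib, Finset.mul_sum]
      _ = θ ^ 2 / 2 * (2 * ((m * (n - m) : ℕ) * (b ^ 2 * Ffun A hX θ))) := by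
          rw [rhs1, rhs2]; ring
  rw [step2] at main
  have hTT : θ * (T - -T) = 2 * (θ * T) := by ring
  rw [hTT, step1] at main
  have hcast : ((m * (n - m) : ℕ) : ℝ) ≤ (m : ℝ) * (n : ℝ) := by
    have h1 : (m * (n - m) : ℕ) ≤ m * n := Nat.mul_le_mul_left m (Nat.sub_le n m)
    calc ((m * (n - m) : ℕ) : ℝ) ≤ ((m * n : ℕ) : ℝ) := by exact_mod_cast h1
      _ = (m : ℝ) * (n : ℝ) := by push_cast; ring
  have hn0 : (0 : ℝ) < n := by
    have : 0 < n := by omega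
    exact_mod_cast this
  have hprod : 0 ≤ θ ^ 2 * b ^ 2 * Ffun A hX θ :=
    mul_nonneg (mul_nonneg (sq_nonneg θ) (sq_nonneg b)) (Ffun_nonneg A hX θ)
  nlinarith [main, mul_le_mul_of_nonneg_left hcast hprod, hprod,
    mul_pos hn0 hn0, Ffun_nonneg A hX θ]

lemma mgf_bound {n d m : ℕ} (hn : 2 ≤ n) (hm : m ≤ n)
    (A : Fin n → Matrix (Fin d) (Fin d) ℂ) (hherm : ∀ i, (A i).IsHermitian)
    (hsum : ∑ i, A i = 0) (b : ℝ)
    (hb : ∀ i j, ‖Matrix.toEuclideanCLM (𝕜 := ℂ) (A i - A j)‖ ≤ b)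
    (hX : ∀ σ : Equiv.Perm (Fin n), (subsampleSum m A σ).IsHermitian) (θ : ℝ) :
    Ffun A hX θ * Real.exp (-(m * b ^ 2 / 2) / 2 * θ ^ 2)
      ≤ (Fintype.card (Equiv.Perm (Fin n)) : ℝ) * d := by
  set c : ℝ := m * b ^ 2 / 2 with hc
  set h : ℝ → ℝ := fun x => Ffun A hX x * Real.exp (-c / 2 * x ^ 2) with hh
  have hD : ∀ x : ℝ, HasDerivAt h
      ((Gfun A hX x - c * x * Ffun A hX x) * Real.exp (-c / 2 * x ^ 2)) x := by
    intro x
    have h1 := (Ffun_hasDeriv A hX x).mul (((hasDerivAt_pow 2 x).const_mul (-c / 2)).exp)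
    exact h1.congr_deriv (by rw [show (2:ℕ) - 1 = 1 from rfl, pow_one]; push_cast; ring)
  have hkey := key_ineq hn hm A hherm hsum b hb hX
  have hcont : Continuous h := by
    have hdiff : Differentiable ℝ h := fun x => (hD x).differentiableAt
    exact hdiff.continuous
  have hanti : AntitoneOn h (Set.Ici (0 : ℝ)) := by
    apply antitoneOn_of_deriv_nonpos (convex_Ici 0) hcont.continuousOn
      (fun x _ => (hD x).differentiableAt.differentiableWithinAt)
    intro x hx
    rw [interior_Ici] at hx
    rw [(hD x).deriv]
    have hkx := hkey x
    have hxpos : 0 < x := hx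
    have hexp := Real.exp_pos (-c / 2 * x ^ 2)
    have hG : Gfun A hX x - (m : ℝ) * b ^ 2 / 2 * x * Ffun A hX x ≤ 0 := by
      nlinarith [hkx, hxpos]
    rw [hc]
    exact mul_nonpos_iff.mpr (Or.inr ⟨hG, hexp.le⟩)
  have hmono : MonotoneOn h (Set.Iic (0 : ℝ)) := by
    apply monotoneOn_of_deriv_nonneg (convex_Iic 0) hcont.continuousOn
      (fun x _ => (hD x).differentiableAt.differentiableWithinAt)
    intro x hx
    rw [interior_Iic] at hx
    rw [(hD x).deriv]
    have hkx := hkey x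
    have hxneg : x < 0 := hx
    have hexp := Real.exp_pos (-c / 2 * x ^ 2)
    have hG : 0 ≤ Gfun A hX x - (m : ℝ) * b ^ 2 / 2 * x * Ffun A hX x := by
      nlinarith [hkx, hxneg]
    rw [hc]
    exact mul_nonneg hG hexp.le
  have hle : h θ ≤ h 0 := by
    rcases le_total 0 θ with hθ | hθ
    · exact hanti (Set.mem_Ici.mpr le_rfl) (Set.mem_Ici.mpr hθ) hθ
    · exact hmono (Set.mem_Iic.mpr hθ) (Set.mem_Iic.mpr le_rfl) hθ
  have h0 : h 0 = (Fintype.card (Equiv.Perm (Fin n)) : ℝ) * d := by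
    rw [hh]
    simp [Ffun, Real.exp_zero]
  calc Ffun A hX θ * Real.exp (-c / 2 * θ ^ 2) = h θ := rfl
    _ ≤ h 0 := hle
    _ = _ := h0

/-- Concentration for sums of a random subset of Hermitian matrices.  Let
`A₁, …, A_n` be `d×d` Hermitian with `Σᵢ Aᵢ = 0` and `‖Aᵢ − A_j‖_op ≤ b`, let `π` be a
uniformly random permutation and `X = Σ_{i=1}^m A_{π(i)}`.  Then for all `t ≥ 0`,
`P(λ_min(X) ≤ −t) ≤ d·exp(−t²/(m b²))` and `P(λ_max(X) ≥ t) ≤ d·exp(−t²/(m b²))`,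
where the probability is the fraction of permutations. -/
theorem subsampleSum_eigenvalue_tails {n d m : ℕ} (hn : 2 ≤ n) (hm : m ≤ n) (hd : 0 < d)
    (hm0 : 0 < m) (A : Fin n → Matrix (Fin d) (Fin d) ℂ)
    (hherm : ∀ i, (A i).IsHermitian) (hsum : ∑ i, A i = 0) (b : ℝ)
    (hb : ∀ i j, ‖Matrix.toEuclideanCLM (𝕜 := ℂ) (A i - A j)‖ ≤ b)
    (hX : ∀ σ : Equiv.Perm (Fin n), (subsampleSum m A σ).IsHermitian) :
    ∀ t : ℝ, 0 ≤ t →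
      ((Nat.card {σ : Equiv.Perm (Fin n) // ⨅ i, (hX σ).eigenvalues i ≤ -t} : ℝ) /
            (Nat.card (Equiv.Perm (Fin n)) : ℝ) ≤
          d * Real.exp (-t ^ 2 / (m * b ^ 2)))
        ∧ ((Nat.card {σ : Equiv.Perm (Fin n) // t ≤ ⨆ i, (hX σ).eigenvalues i} : ℝ) /
            (Nat.card (Equiv.Perm (Fin n)) : ℝ) ≤
          d * Real.exp (-t ^ 2 / (m * b ^ 2))) := by
  classical
  intro t ht
  haveI : Nonempty (Fin d) := ⟨⟨0, hd⟩⟩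
  have hNpos : (0 : ℝ) < (Nat.card (Equiv.Perm (Fin n)) : ℝ) := by
    rw [Nat.card_eq_fintype_card]
    exact_mod_cast Fintype.card_pos
  have hd1 : (1 : ℝ) ≤ d := by exact_mod_cast hd
  have cardsub : ∀ P : Equiv.Perm (Fin n) → Prop,
      (Nat.card {σ : Equiv.Perm (Fin n) // P σ} : ℝ) = ((univ.filter P).card : ℝ) := by
    intro P
    rw [Nat.card_eq_fintype_card, Fintype.card_subtype]
  have hb0 : 0 ≤ b := by
    have h := hb ⟨0, by omega⟩ ⟨0, by omega⟩
    simpa using h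
  rcases eq_or_lt_of_le hb0 with hbz | hbpos
  · -- degenerate case b = 0
    have htriv : ∀ P : Equiv.Perm (Fin n) → Prop,
        (Nat.card {σ : Equiv.Perm (Fin n) // P σ} : ℝ) /
          (Nat.card (Equiv.Perm (Fin n)) : ℝ) ≤ d * Real.exp (-t ^ 2 / (m * b ^ 2)) := by
      intro P
      have h1 : (Nat.card {σ : Equiv.Perm (Fin n) // P σ} : ℝ) /
          (Nat.card (Equiv.Perm (Fin n)) : ℝ) ≤ 1 := by
        rw [cardsub, div_le_one hNpos, Nat.card_eq_fintype_card]
        exact_mod_cast le_trans (Finset.card_filter_le univ P) (le_of_eq Finset.card_univ)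
      have h2 : d * Real.exp (-t ^ 2 / (m * b ^ 2)) = d := by
        rw [← hbz]
        norm_num
      rw [h2]
      exact le_trans h1 hd1
    exact ⟨htriv _, htriv _⟩
  · -- main case b > 0
    have hM2 : (0 : ℝ) < (m : ℝ) * b ^ 2 := by
      have : (0 : ℝ) < (m : ℝ) := by exact_mod_cast hm0
      positivity
    set r : ℝ := t ^ 2 / ((m : ℝ) * b ^ 2) with hr
    have hr0 : 0 ≤ r := by positivity
    set θ0 : ℝ := 2 * t / ((m : ℝ) * b ^ 2) with hθ0def
    have hθ0 : 0 ≤ θ0 := by positivity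
    have e2 : θ0 * t = 2 * r := by
      rw [hθ0def, hr]
      field_simp
    have goal_rw : -t ^ 2 / ((m : ℝ) * b ^ 2) = -r := by rw [hr]; ring
    have final_step : ∀ count Fv : ℝ, 0 ≤ count →
        count * Real.exp (2 * r) ≤ Fv →
        Fv * Real.exp (-r) ≤ (Nat.card (Equiv.Perm (Fin n)) : ℝ) * d →
        count / (Nat.card (Equiv.Perm (Fin n)) : ℝ) ≤ d * Real.exp (-r) := by
      intro count Fv h0 h1 h2
      rw [div_le_iff₀ hNpos]
      have h3 : count * Real.exp (2 * r) * Real.exp (-r) ≤ Fv * Real.exp (-r) :=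
        mul_le_mul_of_nonneg_right h1 (Real.exp_pos _).le
      have h4 : count * Real.exp (2 * r) * Real.exp (-r) = count * Real.exp r := by
        rw [mul_assoc, ← Real.exp_add]
        ring_nf
      rw [h4] at h3
      have h5 := le_trans h3 h2
      have h6 := mul_le_mul_of_nonneg_right h5 (Real.exp_pos (-r)).le
      rw [mul_assoc, ← Real.exp_add] at h6
      simp only [add_neg_cancel, Real.exp_zero, mul_one] at h6
      calc count ≤ (Nat.card (Equiv.Perm (Fin n)) : ℝ) * d * Real.exp (-r) := h6
        _ = d * Real.exp (-r) * (Nat.card (Equiv.Perm (Fin n)) : ℝ) := by ring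
    -- MGF bounds
    have hmgfp := mgf_bound hn hm A hherm hsum b hb hX θ0
    have hmgfm := mgf_bound hn hm A hherm hsum b hb hX (-θ0)
    have eθp : -((m : ℝ) * b ^ 2 / 2) / 2 * θ0 ^ 2 = -r := by
      rw [hθ0def, hr]
      field_simp
    have eθm : -((m : ℝ) * b ^ 2 / 2) / 2 * (-θ0) ^ 2 = -r := by
      rw [hθ0def, hr]
      field_simp
    rw [eθp] at hmgfp
    rw [eθm] at hmgfm
    rw [← Nat.card_eq_fintype_card] at hmgfp hmgfm
    constructor
    · -- inf tail
      rw [cardsub, goal_rw]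
      apply final_step _ (Ffun A hX (-θ0)) (by positivity) _ hmgfm
      have hcnt : ∀ σ ∈ univ.filter (fun σ : Equiv.Perm (Fin n) =>
          ⨅ i, (hX σ).eigenvalues i ≤ -t), Real.exp (2 * r)
            ≤ ∑ i, Real.exp ((-θ0) * (hX σ).eigenvalues i) := by
        intro σ hσ
        have hσ' : ⨅ i, (hX σ).eigenvalues i ≤ -t := by simpa using hσ
        obtain ⟨i0, hi0⟩ := Finite.exists_min ((hX σ).eigenvalues)
        have hinf : (hX σ).eigenvalues i0 ≤ ⨅ i, (hX σ).eigenvalues i := le_ciInf hi0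
        have ht0 : (hX σ).eigenvalues i0 ≤ -t := le_trans hinf hσ'
        have hexp1 : Real.exp (θ0 * t) ≤ Real.exp ((-θ0) * (hX σ).eigenvalues i0) := by
          apply Real.exp_le_exp.mpr
          nlinarith [hθ0, ht0]
        rw [← e2]
        exact le_trans hexp1 (Finset.single_le_sum
          (fun i _ => (Real.exp_pos ((-θ0) * (hX σ).eigenvalues i)).le) (Finset.mem_univ i0))
      calc ((univ.filter (fun σ : Equiv.Perm (Fin n) =>
            ⨅ i, (hX σ).eigenvalues i ≤ -t)).card : ℝ) * Real.exp (2 * r)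
          = ∑ _σ ∈ univ.filter (fun σ : Equiv.Perm (Fin n) =>
            ⨅ i, (hX σ).eigenvalues i ≤ -t), Real.exp (2 * r) := by
            rw [Finset.sum_const, nsmul_eq_mul]
        _ ≤ ∑ σ ∈ univ.filter (fun σ : Equiv.Perm (Fin n) =>
            ⨅ i, (hX σ).eigenvalues i ≤ -t), ∑ i, Real.exp ((-θ0) * (hX σ).eigenvalues i) :=
            Finset.sum_le_sum hcnt
        _ ≤ Ffun A hX (-θ0) := Finset.sum_le_sum_of_subset_of_nonneg
            (Finset.filter_subset _ _)
            (fun σ _ _ => Finset.sum_nonneg fun i _ => (Real.exp_pos _).le)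
    · -- sup tail
      rw [cardsub, goal_rw]
      apply final_step _ (Ffun A hX θ0) (by positivity) _ hmgfp
      have hcnt : ∀ σ ∈ univ.filter (fun σ : Equiv.Perm (Fin n) =>
          t ≤ ⨆ i, (hX σ).eigenvalues i), Real.exp (2 * r)
            ≤ ∑ i, Real.exp (θ0 * (hX σ).eigenvalues i) := by
        intro σ hσ
        have hσ' : t ≤ ⨆ i, (hX σ).eigenvalues i := by simpa using hσ
        obtain ⟨i0, hi0⟩ := Finite.exists_max ((hX σ).eigenvalues)
        have hsup : (⨆ i, (hX σ).eigenvalues i) ≤ (hX σ).eigenvalues i0 := ciSup_le hi0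
        have ht0 : t ≤ (hX σ).eigenvalues i0 := le_trans hσ' hsup
        have hexp1 : Real.exp (θ0 * t) ≤ Real.exp (θ0 * (hX σ).eigenvalues i0) :=
          Real.exp_le_exp.mpr (mul_le_mul_of_nonneg_left ht0 hθ0)
        rw [← e2]
        exact le_trans hexp1 (Finset.single_le_sum
          (fun i _ => (Real.exp_pos (θ0 * (hX σ).eigenvalues i)).le) (Finset.mem_univ i0))
      calc ((univ.filter (fun σ : Equiv.Perm (Fin n) =>
            t ≤ ⨆ i, (hX σ).eigenvalues i)).card : ℝ) * Real.exp (2 * r)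
          = ∑ _σ ∈ univ.filter (fun σ : Equiv.Perm (Fin n) =>
            t ≤ ⨆ i, (hX σ).eigenvalues i), Real.exp (2 * r) := by
            rw [Finset.sum_const, nsmul_eq_mul]
        _ ≤ ∑ σ ∈ univ.filter (fun σ : Equiv.Perm (Fin n) =>
            t ≤ ⨆ i, (hX σ).eigenvalues i), ∑ i, Real.exp (θ0 * (hX σ).eigenvalues i) :=
            Finset.sum_le_sum hcnt
        _ ≤ Ffun A hX θ0 := Finset.sum_le_sum_of_subset_of_nonneg
            (Finset.filter_subset _ _)
            (fun σ _ _ => Finset.sum_nonneg fun i _ => (Real.exp_pos _).le)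
end

section
/- Let A₁,…,A_n be d×d Hermitian matrices with Σᵢ Aᵢ = 0 and ‖Aᵢ − A_j‖_op ≤ b for all i,j, π a uniform random permutation, X = Σ_{i=1}^m A_{π(i)}, and X' obtained by swapping two uniformly random indices in π. Then the conditional variance satisfies Δ_X = ((n−1)/4)·E[(X − X')² | π] ⪯ (m(n−m)/(2n))·b²·I_d. -/
open Finset ComplexOrder

def auxQ (m : ℕ) {n : ℕ} (J K : Fin n) : Prop :=
  ((J : ℕ) < m ∧ ¬ (K : ℕ) < m) ∨ ((K : ℕ) < m ∧ ¬ (J : ℕ) < m)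

instance {m n : ℕ} (J K : Fin n) : Decidable (auxQ m J K) := by
  unfold auxQ; infer_instance

lemma aux_dot_self (d : ℕ) (v : Fin d → ℂ) :
    dotProduct (star v) v = ((‖(WithLp.equiv 2 (Fin d → ℂ)).symm v‖ ^ 2 : ℝ) : ℂ) := by
  rw [EuclideanSpace.norm_eq, Real.sq_sqrt (by positivity)]
  unfold dotProduct
  push_cast
  refine Finset.sum_congr rfl fun i _ => ?_
  simp only [Pi.star_apply, WithLp.equiv_symm_apply, PiLp.toLp_apply]
  rw [Complex.star_def, ← Complex.normSq_eq_conj_mul_self, Complex.normSq_eq_norm_sq]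
  push_cast
  ring

/-- key: for Hermitian `M` with operator norm at most `b`, `b² - M² ⪰ 0`. -/
lemma aux_sq_psd {d : ℕ} {M : Matrix (Fin d) (Fin d) ℂ} (hM : M.IsHermitian) {b : ℝ}
    (hb : ‖Matrix.toEuclideanCLM (𝕜 := ℂ) M‖ ≤ b) :
    (((b ^ 2 : ℝ) : ℂ) • (1 : Matrix (Fin d) (Fin d) ℂ) - M ^ 2).PosSemidef := by
  rw [Matrix.posSemidef_iff_dotProduct_mulVec]
  constructor
  · have h1 : (((b ^ 2 : ℝ) : ℂ) • (1 : Matrix (Fin d) (Fin d) ℂ)).IsHermitian := by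
      simp [Matrix.IsHermitian, Matrix.conjTranspose_smul, Complex.star_def,
        Complex.conj_ofReal]
    exact h1.sub (hM.pow 2)
  · intro x
    have key : dotProduct (star x) ((M ^ 2).mulVec x) =
        dotProduct (star (M.mulVec x)) (M.mulVec x) := by
      rw [pow_two, ← Matrix.mulVec_mulVec, Matrix.dotProduct_mulVec, Matrix.star_mulVec,
        hM.eq]
    rw [Matrix.sub_mulVec, Matrix.smul_mulVec, Matrix.one_mulVec, dotProduct_sub,
      dotProduct_smul, key, aux_dot_self, aux_dot_self, smul_eq_mul]
    set vx := (WithLp.equiv 2 (Fin d → ℂ)).symm x with hvx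
    set vy := (WithLp.equiv 2 (Fin d → ℂ)).symm (M.mulVec x) with hvy
    have hnorm : ‖vy‖ ≤ b * ‖vx‖ := by
      have heq : vy = Matrix.toEuclideanCLM (𝕜 := ℂ) M vx := by
        rw [hvy, hvx, WithLp.equiv_symm_apply, Matrix.toEuclideanCLM_toLp]
      rw [heq]
      calc ‖Matrix.toEuclideanCLM (𝕜 := ℂ) M vx‖
          ≤ ‖Matrix.toEuclideanCLM (𝕜 := ℂ) M‖ * ‖vx‖ :=
            (Matrix.toEuclideanCLM (𝕜 := ℂ) M).le_opNorm vx
        _ ≤ b * ‖vx‖ := by gcongr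
    rw [← Complex.ofReal_mul, ← Complex.ofReal_sub, Complex.zero_le_real]
    nlinarith [norm_nonneg vx, norm_nonneg vy,
      (norm_nonneg (Matrix.toEuclideanCLM (𝕜 := ℂ) M)).trans hb]

lemma aux_smul_psd {d : ℕ} {M : Matrix (Fin d) (Fin d) ℂ} (hM : M.PosSemidef) {c : ℝ}
    (hc : 0 ≤ c) : ((c : ℂ) • M).PosSemidef := by
  rw [Matrix.posSemidef_iff_dotProduct_mulVec]
  constructor
  · simp [Matrix.IsHermitian, Matrix.conjTranspose_smul, Complex.star_def,
      Complex.conj_ofReal, hM.1.eq]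
  · intro x
    rw [Matrix.smul_mulVec, dotProduct_smul, smul_eq_mul]
    exact mul_nonneg (by positivity) (hM.dotProduct_mulVec_nonneg x)

lemma aux_sum_psd {d : ℕ} {ι : Type*} (s : Finset ι) (f : ι → Matrix (Fin d) (Fin d) ℂ)
    (h : ∀ i ∈ s, (f i).PosSemidef) : (∑ i ∈ s, f i).PosSemidef :=
  Finset.sum_induction f _ (fun _ _ ha hb => ha.add hb) .zero h

/-- Conditional variance bound for the subsampling Stein pair: with `A₁, …, A_n`
Hermitian, `Σᵢ Aᵢ = 0`, `‖Aᵢ − A_j‖_op ≤ b`, `X = Σ_{i=1}^m A_{π(i)}` and `X'` obtained by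
a uniformly random transposition of `π`,
`Δ_X = ((n−1)/4)·E[(X − X')² | π] ⪯ (m(n−m)/(2n))·b²·I_d`. -/
theorem subsample_conditional_variance_bound {n d m : ℕ} (hn : 2 ≤ n) (hm : m ≤ n)
    (A : Fin n → Matrix (Fin d) (Fin d) ℂ) (hherm : ∀ i, (A i).IsHermitian)
    (hsum : ∑ i, A i = 0) (b : ℝ)
    (hb : ∀ i j, ‖Matrix.toEuclideanCLM (𝕜 := ℂ) (A i - A j)‖ ≤ b)
    (π : Equiv.Perm (Fin n)) :
    (((((m : ℝ) * ((n : ℝ) - m) / (2 * n)) * b ^ 2 : ℝ) : ℂ) •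
          (1 : Matrix (Fin d) (Fin d) ℂ)
        - (((n : ℂ) - 1) / 4) •
            (((n : ℂ) * ((n : ℂ) - 1))⁻¹ •
              ∑ J : Fin n, ∑ K : Fin n,
                if J ≠ K then
                  (subsampleSum m A π - subsampleSum m A (π * Equiv.swap J K)) ^ 2
                else 0)).PosSemidef := by
  have hn0 : (n : ℂ) ≠ 0 := by
    exact_mod_cast Nat.cast_ne_zero.mpr (by omega)
  have hn1 : (n : ℂ) - 1 ≠ 0 := by
    have : ((n : ℕ) : ℂ) ≠ ((1 : ℕ) : ℂ) := by
      exact_mod_cast Nat.cast_injective.ne (by omega : n ≠ 1)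
    simpa [sub_eq_zero] using this
  -- Step 1: the difference formula
  have hdiff : ∀ J K : Fin n, J ≠ K →
      subsampleSum m A π - subsampleSum m A (π * Equiv.swap J K) =
        (if (J : ℕ) < m then A (π J) - A (π K) else 0) +
        (if (K : ℕ) < m then A (π K) - A (π J) else 0) := by
    intro J K hJK
    unfold subsampleSum
    rw [← Finset.sum_sub_distrib]
    have hpt : ∀ i : Fin n,
        ((if (i : ℕ) < m then A (π i) else 0) -
          (if (i : ℕ) < m then A ((π * Equiv.swap J K) i) else 0)) =
        (if i = J then (if (J : ℕ) < m then A (π J) - A (π K) else 0) else 0) +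
        (if i = K then (if (K : ℕ) < m then A (π K) - A (π J) else 0) else 0) := by
      intro i
      rcases eq_or_ne i J with rfl | hiJ
      · simp [Equiv.Perm.mul_apply, Equiv.swap_apply_left, hJK, ite_sub_ite]
      · rcases eq_or_ne i K with rfl | hiK
        · simp [Equiv.Perm.mul_apply, Equiv.swap_apply_right, hiJ, ite_sub_ite]
        · simp [Equiv.Perm.mul_apply, Equiv.swap_apply_of_ne_of_ne hiJ hiK, hiJ, hiK,
            ite_sub_ite]
    rw [Finset.sum_congr rfl fun i _ => hpt i, Finset.sum_add_distrib,
      Finset.sum_ite_eq' Finset.univ J, Finset.sum_ite_eq' Finset.univ K]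
    simp
  -- Step 2: square formula
  have hsq : ∀ J K : Fin n,
      (if J ≠ K then
          (subsampleSum m A π - subsampleSum m A (π * Equiv.swap J K)) ^ 2 else 0) =
      (if auxQ m J K then (A (π J) - A (π K)) ^ 2 else 0) := by
    intro J K
    rcases eq_or_ne J K with rfl | hJK
    · rw [if_neg (by simp), if_neg (by unfold auxQ; tauto)]
    · rw [if_pos hJK, hdiff J K hJK]
      by_cases hJ : (J : ℕ) < m <;> by_cases hK : (K : ℕ) < m
      · rw [if_pos hJ, if_pos hK, if_neg (by unfold auxQ; tauto)]
        have hz : A (π J) - A (π K) + (A (π K) - A (π J)) = 0 := by abel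
        rw [hz]
        exact zero_pow (by norm_num)
      · have hq : auxQ m J K := Or.inl ⟨hJ, hK⟩
        rw [if_pos hJ, if_neg hK, if_pos hq, add_zero]
      · have hq : auxQ m J K := Or.inr ⟨hK, hJ⟩
        rw [if_neg hJ, if_pos hK, if_pos hq, zero_add, ← neg_sub, neg_sq]
      · rw [if_neg hJ, if_neg hK, if_neg (by unfold auxQ; tauto), add_zero]
        exact zero_pow (by norm_num)
  simp only [hsq]
  -- Step 3: scalar simplification of the outer coefficients
  have hscal : ∀ S : Matrix (Fin d) (Fin d) ℂ,
      (((n : ℂ) - 1) / 4) • (((n : ℂ) * ((n : ℂ) - 1))⁻¹ • S) = ((4 * (n : ℂ))⁻¹) • S := by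
    intro S
    rw [smul_smul]
    congr 1
    field_simp
  rw [hscal]
  -- Step 4: counting
  have hcardlt : (Finset.univ.filter (fun K : Fin n => (K : ℕ) < m)).card = m := by
    have heq : (Finset.univ.filter (fun K : Fin n => (K : ℕ) < m)) =
        Finset.map (Fin.castLEEmb hm) Finset.univ := by
      ext K
      simp only [Finset.mem_filter, Finset.mem_univ, true_and, Finset.mem_map,
        Fin.castLEEmb, Function.Embedding.coeFn_mk]
      constructor
      · intro h; exact ⟨⟨K, h⟩, by simp [Fin.castLE, Fin.ext_iff]⟩
      · rintro ⟨k, hk⟩; rw [← hk]; simpa using k.isLt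
    rw [heq]; simp
  have hcardge : (Finset.univ.filter (fun K : Fin n => ¬ (K : ℕ) < m)).card = n - m := by
    have htot := Finset.card_filter_add_card_filter_not
      (s := (Finset.univ : Finset (Fin n))) (p := fun K : Fin n => (K : ℕ) < m)
    simp only [not_lt, Finset.card_univ, Fintype.card_fin, hcardlt] at htot
    simp only [not_lt]
    omega
  -- rewrite the constant
  have hconst : ((((m : ℝ) * ((n : ℝ) - m) / (2 * n)) * b ^ 2 : ℝ) : ℂ) •
        (1 : Matrix (Fin d) (Fin d) ℂ) =
      ((4 * (n : ℂ))⁻¹) • ∑ J : Fin n, ∑ K : Fin n,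
        (if auxQ m J K then ((b ^ 2 : ℝ) : ℂ) • (1 : Matrix (Fin d) (Fin d) ℂ) else 0) := by
    have hinner : ∀ J : Fin n, (∑ K : Fin n,
        (if auxQ m J K then ((b ^ 2 : ℝ) : ℂ) • (1 : Matrix (Fin d) (Fin d) ℂ) else 0)) =
        (if (J : ℕ) < m then (n - m : ℕ) else m) •
          (((b ^ 2 : ℝ) : ℂ) • (1 : Matrix (Fin d) (Fin d) ℂ)) := by
      intro J
      by_cases hJ : (J : ℕ) < m
      · have hptw : ∀ K : Fin n,
            (if auxQ m J K then ((b ^ 2 : ℝ) : ℂ) • (1 : Matrix (Fin d) (Fin d) ℂ) else 0)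
            = (if ¬ (K : ℕ) < m then ((b ^ 2 : ℝ) : ℂ) • (1 : Matrix (Fin d) (Fin d) ℂ)
                else 0) := by
          intro K
          by_cases hK : (K : ℕ) < m
          · rw [if_neg (by unfold auxQ; tauto), if_neg (by tauto)]
          · have hq : auxQ m J K := Or.inl ⟨hJ, hK⟩
            rw [if_pos hq, if_pos hK]
        rw [Finset.sum_congr rfl fun K _ => hptw K, Finset.sum_ite, Finset.sum_const,
          Finset.sum_const, hcardge, if_pos hJ]
        simp
      · have hptw : ∀ K : Fin n,
            (if auxQ m J K then ((b ^ 2 : ℝ) : ℂ) • (1 : Matrix (Fin d) (Fin d) ℂ) else 0)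
            = (if (K : ℕ) < m then ((b ^ 2 : ℝ) : ℂ) • (1 : Matrix (Fin d) (Fin d) ℂ)
                else 0) := by
          intro K
          by_cases hK : (K : ℕ) < m
          · have hq : auxQ m J K := Or.inr ⟨hK, hJ⟩
            rw [if_pos hq, if_pos hK]
          · rw [if_neg (by unfold auxQ; tauto), if_neg hK]
        rw [Finset.sum_congr rfl fun K _ => hptw K, Finset.sum_ite, Finset.sum_const,
          Finset.sum_const, hcardlt, if_neg hJ]
        simp
    rw [Finset.sum_congr rfl fun J _ => hinner J]
    simp only [ite_smul]
    rw [Finset.sum_ite, Finset.sum_const, Finset.sum_const, hcardlt, hcardge]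
    simp only [← Nat.cast_smul_eq_nsmul ℂ, smul_smul, smul_add]
    rw [← add_smul]
    congr 1
    push_cast [Nat.cast_sub hm]
    field_simp
    ring
  rw [hconst, ← smul_sub, ← Finset.sum_sub_distrib]
  have hsplit : ∀ J : Fin n,
      ((∑ K : Fin n,
          (if auxQ m J K then ((b ^ 2 : ℝ) : ℂ) • (1 : Matrix (Fin d) (Fin d) ℂ) else 0)) -
        ∑ K : Fin n, (if auxQ m J K then (A (π J) - A (π K)) ^ 2 else 0)) =
      ∑ K : Fin n, (if auxQ m J K then
        (((b ^ 2 : ℝ) : ℂ) • (1 : Matrix (Fin d) (Fin d) ℂ) - (A (π J) - A (π K)) ^ 2)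
        else 0) := by
    intro J
    rw [← Finset.sum_sub_distrib]
    refine Finset.sum_congr rfl fun K _ => ?_
    by_cases h : auxQ m J K
    · rw [if_pos h, if_pos h, if_pos h]
    · rw [if_neg h, if_neg h, if_neg h, sub_zero]
  rw [Finset.sum_congr rfl fun J _ => hsplit J]
  -- Step 5: positivity
  have h4n : ((4 * (n : ℂ))⁻¹) = (((4 * (n : ℝ))⁻¹ : ℝ) : ℂ) := by push_cast; ring
  rw [h4n]
  refine aux_smul_psd ?_ (by positivity)
  refine aux_sum_psd _ _ fun J _ => aux_sum_psd _ _ fun K _ => ?_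
  by_cases h : auxQ m J K
  · rw [if_pos h]
    exact aux_sq_psd ((hherm (π J)).sub (hherm (π K))) (hb (π J) (π K))
  · rw [if_neg h]; exact .zero
end
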